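/- arXiv:0705.2460 — 4 statements merged into one kernel-verified Lean document; each statement's English description precedes it below -/
import Mathlib

section
/- Invariance of the functions φ_n(t,x) := (1/√2) t^{-(n+1)/2} e^{-x²/(4t)} φ_n(x/√(2t)) under the heat kernel: for 0 < t₁ < t₂ and x₂ ∈ ℝ, ∫_ℝ p(t₂-t₁, x₂|x₁) φ_n(t₁, x₁) dx₁ = φ_n(t₂, x₂) for every nonnegative integer n. -/
open MeasureTheory Real

/-- The one-dimensional heat kernel `p(t, y | x)`. -/
noncomputable def heatKernel (t y x : ℝ) : ℝ :=
  (Real.sqrt (2 * π * t))⁻¹ * Real.exp (-(y - x) ^ 2 / (2 * t))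

/-- Hermite polynomials by the Rodrigues formula. -/
noncomputable def hermiteH (n : ℕ) (x : ℝ) : ℝ :=
  (-1 : ℝ) ^ n * Real.exp (x ^ 2) * iteratedDeriv n (fun y => Real.exp (-(y ^ 2))) x

/-- Hermite orthonormal functions `φ_n`. -/
noncomputable def hermiteFun (n : ℕ) (x : ℝ) : ℝ :=
  (Real.sqrt (Real.sqrt π * 2 ^ n * n.factorial))⁻¹ * Real.exp (-(x ^ 2) / 2) * hermiteH n x

/-- The space-time functions `φ_n(t,x)`. -/
noncomputable def phiT (n : ℕ) (t x : ℝ) : ℝ :=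
  (Real.sqrt 2)⁻¹ * t ^ (-(((n : ℝ) + 1) / 2)) * Real.exp (-(x ^ 2) / (4 * t)) *
    hermiteFun n (x / Real.sqrt (2 * t))

section Aux
open Filter

/-- Scaled Hermite polynomials (three-term recurrence form). -/
noncomputable def K : ℕ → ℝ → ℝ → ℝ
  | 0, _, _ => 1
  | 1, _, x => x
  | (n+2), t, x => x * K (n+1) t x - ((n : ℝ) + 1) * t * K n t x

@[simp] lemma K_zero (t x : ℝ) : K 0 t x = 1 := rfl
@[simp] lemma K_one (t x : ℝ) : K 1 t x = x := rfl
lemma K_add_two (n : ℕ) (t x : ℝ) :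
    K (n+2) t x = x * K (n+1) t x - ((n : ℝ) + 1) * t * K n t x := rfl

lemma K_cont (n : ℕ) (t : ℝ) : Continuous (fun x => K n t x) := by
  induction n using Nat.twoStepInduction with
  | zero => simpa using continuous_const
  | one => simpa using continuous_id'
  | more n ih1 ih2 =>
      simp only [K_add_two]
      exact (continuous_id.mul ih2).sub (continuous_const.mul ih1)

lemma K_hasDerivAt (n : ℕ) (t x : ℝ) :
    HasDerivAt (fun x => K (n+1) t x) (((n : ℝ) + 1) * K n t x) x := by
  induction n using Nat.twoStepInduction generalizing x with
  | zero => simpa using hasDerivAt_id' x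
  | one =>
      have h : HasDerivAt (fun x : ℝ => x * x - (0 + 1) * t * 1) (x + x) x := by
        simpa using ((hasDerivAt_id x).mul (hasDerivAt_id x)).sub_const ((0+1)*t*1)
      have : (fun x : ℝ => K 2 t x) = fun x : ℝ => x * x - (0 + 1) * t * 1 := by
        funext y; simp [K_add_two]
      rw [this]
      convert h using 1
      simp [K_add_two]; ring
  | more n ih1 ih2 =>
      have h1 : HasDerivAt (fun x => K (n+2) t x) (((n : ℝ) + 1 + 1) * K (n+1) t x) x := by
        simpa [Nat.cast_add] using ih2 (x := x)
      have h2 : HasDerivAt (fun x => K (n+1) t x) (((n : ℝ) + 1) * K n t x) x := ih1 (x := x)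
      have hx : HasDerivAt (fun x : ℝ => x) 1 x := hasDerivAt_id x
      have h3 : HasDerivAt (fun x => x * K (n+2) t x - ((n : ℝ) + 1 + 1) * t * K (n+1) t x)
          (1 * K (n+2) t x + x * (((n : ℝ) + 1 + 1) * K (n+1) t x)
            - ((n : ℝ) + 1 + 1) * t * (((n : ℝ) + 1) * K n t x)) x :=
        (hx.mul h1).sub (h2.const_mul _)
      have : (fun x => K (n+3) t x)
          = fun x => x * K (n+2) t x - ((n : ℝ) + 1 + 1) * t * K (n+1) t x := by
        funext y; rw [K_add_two]; push_cast; ring_nf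
      rw [show n + 2 + 1 = n + 3 from rfl, this]
      convert h3 using 1
      rw [K_add_two]; push_cast; ring

lemma K_bound (n : ℕ) (t : ℝ) : ∃ C : ℝ, 0 ≤ C ∧ ∀ x : ℝ, |K n t x| ≤ C * (1 + |x|) ^ n := by
  induction n using Nat.twoStepInduction with
  | zero => exact ⟨1, zero_le_one, fun x => by simp⟩
  | one => exact ⟨1, zero_le_one, fun x => by simp⟩
  | more n ih1 ih2 =>
      obtain ⟨C1, hC1, h1⟩ := ih1
      obtain ⟨C2, hC2, h2⟩ := ih2
      refine ⟨C2 + ((n : ℝ) + 1) * |t| * C1, by positivity, fun x => ?_⟩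
      have hx : (0:ℝ) ≤ |x| := abs_nonneg x
      have h1x : (1:ℝ) ≤ 1 + |x| := by linarith
      have hp1 : |x| * |K (n+1) t x| ≤ C2 * (1 + |x|) ^ (n+2) := by
        calc |x| * |K (n+1) t x| ≤ (1 + |x|) * (C2 * (1 + |x|) ^ (n+1)) := by
              apply mul_le_mul (by linarith) (h2 x) (abs_nonneg _) (by linarith)
          _ = C2 * (1 + |x|) ^ (n+2) := by ring
      have hp2 : ((n : ℝ) + 1) * |t| * |K n t x| ≤ ((n : ℝ) + 1) * |t| * C1 * (1 + |x|) ^ (n+2) := by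
        have hKn : |K n t x| ≤ C1 * (1 + |x|) ^ (n+2) := by
          refine (h1 x).trans ?_
          have : (1 + |x|) ^ n ≤ (1 + |x|) ^ (n+2) :=
            pow_le_pow_right₀ h1x (by omega)
          nlinarith
        calc ((n : ℝ) + 1) * |t| * |K n t x| ≤ ((n : ℝ) + 1) * |t| * (C1 * (1 + |x|) ^ (n+2)) := by
              apply mul_le_mul_of_nonneg_left hKn (by positivity)
          _ = ((n : ℝ) + 1) * |t| * C1 * (1 + |x|) ^ (n+2) := by ring
      have habs : |((n : ℝ) + 1) * t * K n t x| = ((n:ℝ)+1) * |t| * |K n t x| := by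
        rw [abs_mul, abs_mul, abs_of_nonneg (show (0:ℝ) ≤ (n:ℝ)+1 by positivity)]
      calc |K (n+2) t x| ≤ |x * K (n+1) t x| + |((n : ℝ) + 1) * t * K n t x| := by
            rw [K_add_two]; exact abs_sub _ _
        _ = |x| * |K (n+1) t x| + ((n : ℝ) + 1) * |t| * |K n t x| := by rw [abs_mul, habs]
        _ ≤ C2 * (1 + |x|) ^ (n+2) + ((n : ℝ) + 1) * |t| * C1 * (1 + |x|) ^ (n+2) :=
            add_le_add hp1 hp2
        _ = (C2 + ((n : ℝ) + 1) * |t| * C1) * (1 + |x|) ^ (n+2) := by ring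

lemma pow_le_factorial_mul_exp (m : ℕ) {y : ℝ} (hy : 0 ≤ y) :
    y ^ m ≤ (m.factorial : ℝ) * Real.exp y := by
  have h := Real.sum_le_exp_of_nonneg hy (m + 1)
  have h1 : y ^ m / (m.factorial : ℝ) ≤ ∑ i ∈ Finset.range (m+1), y ^ i / (i.factorial : ℝ) :=
    Finset.single_le_sum (f := fun i => y ^ i / (i.factorial : ℝ))
      (fun i _ => by positivity) (Finset.self_mem_range_succ m)
  have hm : (0:ℝ) < (m.factorial : ℝ) := by positivity
  rw [div_le_iff₀ hm] at *
  calc y ^ m ≤ (∑ i ∈ Finset.range (m+1), y ^ i / (i.factorial : ℝ)) * (m.factorial : ℝ) := h1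
    _ ≤ Real.exp y * (m.factorial : ℝ) := by
        apply mul_le_mul_of_nonneg_right h hm.le
    _ = (m.factorial : ℝ) * Real.exp y := by ring

lemma master_bound (m : ℕ) {b : ℝ} (hb : 0 < b) :
    ∃ D : ℝ, 0 ≤ D ∧ ∀ x : ℝ,
      (1 + |x|) ^ m * Real.exp (-(b * x ^ 2)) ≤ D * Real.exp (-(b/2) * x ^ 2) := by
  refine ⟨(m.factorial : ℝ) * Real.exp (1 + 1/(2*b)), by positivity, fun x => ?_⟩
  have h1 : (1 + |x|) ^ m ≤ (m.factorial : ℝ) * Real.exp (1 + |x|) :=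
    pow_le_factorial_mul_exp m (by positivity)
  have h2 : |x| ≤ (b/2) * x ^ 2 + 1/(2*b) := by
    have key : 2*b*|x| ≤ b^2*x^2 + 1 := by nlinarith [sq_nonneg (b*|x| - 1), sq_abs x]
    have h2b : (0:ℝ) < 2*b := by positivity
    have heq : b/2 * x^2 + 1/(2*b) = (b^2*x^2+1)/(2*b) := by field_simp
    rw [heq, le_div_iff₀ h2b]; linarith
  calc (1 + |x|) ^ m * Real.exp (-(b * x ^ 2))
      ≤ (m.factorial : ℝ) * Real.exp (1 + |x|) * Real.exp (-(b * x ^ 2)) := by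
        apply mul_le_mul_of_nonneg_right h1 (Real.exp_pos _).le
    _ = (m.factorial : ℝ) * Real.exp (1 + |x| - b * x ^ 2) := by
        rw [mul_assoc, ← Real.exp_add]; ring_nf
    _ ≤ (m.factorial : ℝ) * Real.exp (1 + 1/(2*b) - (b/2) * x ^ 2) := by
        apply mul_le_mul_of_nonneg_left (Real.exp_le_exp.2 (by linarith)) (by positivity)
    _ = (m.factorial : ℝ) * Real.exp (1 + 1/(2*b)) * Real.exp (-(b/2) * x ^ 2) := by
        rw [mul_assoc, ← Real.exp_add]; ring_nf

lemma tendsto_exp_neg_sq_atTop {c : ℝ} (hc : 0 < c) :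
    Tendsto (fun x : ℝ => Real.exp (-c * x ^ 2)) atTop (nhds 0) := by
  apply Real.tendsto_exp_atBot.comp
  have h1 : Tendsto (fun x : ℝ => c * x ^ 2) atTop atTop :=
    (tendsto_pow_atTop (two_ne_zero)).const_mul_atTop hc
  simpa [Function.comp_def, neg_mul] using tendsto_neg_atTop_atBot.comp h1

lemma tendsto_exp_neg_sq_atBot {c : ℝ} (hc : 0 < c) :
    Tendsto (fun x : ℝ => Real.exp (-c * x ^ 2)) atBot (nhds 0) := by
  have h := (tendsto_exp_neg_sq_atTop hc).comp tendsto_neg_atBot_atTop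
  simpa [Function.comp_def] using h

noncomputable def Efun (s t x₂ x : ℝ) : ℝ :=
  Real.exp (-(x₂ - x) ^ 2 / (2 * s) - x ^ 2 / (2 * t))

lemma Efun_cont (s t x₂ : ℝ) : Continuous (fun x => Efun s t x₂ x) := by
  unfold Efun; fun_prop

lemma Efun_hasDerivAt (s t x₂ : ℝ) (hs : s ≠ 0) (ht : t ≠ 0) (x : ℝ) :
    HasDerivAt (fun x => Efun s t x₂ x) (((x₂ - x) / s - x / t) * Efun s t x₂ x) x := by
  have hq : HasDerivAt (fun x => -(x₂ - x) ^ 2 / (2 * s) - x ^ 2 / (2 * t))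
      ((x₂ - x) / s - x / t) x := by
    have h1 : HasDerivAt (fun x : ℝ => x₂ - x) (-1) x := by
      simpa using (hasDerivAt_id x).const_sub x₂
    have h2 := ((h1.pow 2).neg).div_const (2*s)
    have h3 := (hasDerivAt_pow 2 x).div_const (2*t)
    convert h2.sub h3 using 1 <;> try rfl
    push_cast
    field_simp
  simpa [Efun, mul_comm] using hq.exp

lemma Efun_le (s t x₂ : ℝ) (hs : 0 < s) (ht : 0 < t) (x : ℝ) :
    Efun s t x₂ x ≤ Real.exp (-(1/(2*t)) * x ^ 2) := by
  unfold Efun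
  apply Real.exp_le_exp.2
  have h1 : -(x₂ - x) ^ 2 / (2 * s) ≤ 0 := by
    apply div_nonpos_of_nonpos_of_nonneg (neg_nonpos.2 (sq_nonneg _)) (by positivity)
  have : x ^ 2 / (2 * t) = (1/(2*t)) * x ^ 2 := by ring
  linarith [this]

lemma norm_mul_Efun_le (s t x₂ : ℝ) (hs : 0 < s) (ht : 0 < t)
    (f : ℝ → ℝ) (C : ℝ) (m : ℕ) (hb : ∀ x, |f x| ≤ C * (1 + |x|) ^ m)
    (D : ℝ)
    (hDle : ∀ x : ℝ, (1 + |x|) ^ m * Real.exp (-(1/(2*t) * x ^ 2)) ≤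
      D * Real.exp (-(1/(2*t)/2) * x ^ 2)) :
    ∀ x, ‖f x * Efun s t x₂ x‖ ≤ (C * D) * Real.exp (-((1/(2*t))/2) * x ^ 2) := by
  have hC : 0 ≤ C := by
    have h0 := (abs_nonneg (f 0)).trans (hb 0)
    simpa using h0
  intro x
  rw [Real.norm_eq_abs, abs_mul]
  have hEpos : (0:ℝ) < Efun s t x₂ x := Real.exp_pos _
  have hE : |Efun s t x₂ x| ≤ Real.exp (-(1/(2*t)) * x ^ 2) := by
    rw [abs_of_pos hEpos]
    exact Efun_le s t x₂ hs ht x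
  calc |f x| * |Efun s t x₂ x| ≤ (C * (1 + |x|) ^ m) * Real.exp (-(1/(2*t)) * x ^ 2) :=
        mul_le_mul (hb x) hE (abs_nonneg _) (mul_nonneg hC (by positivity))
    _ = C * ((1 + |x|) ^ m * Real.exp (-(1/(2*t) * x ^ 2))) := by ring_nf
    _ ≤ C * (D * Real.exp (-((1/(2*t))/2) * x ^ 2)) := by
        exact mul_le_mul_of_nonneg_left (hDle x) hC
    _ = (C * D) * Real.exp (-((1/(2*t))/2) * x ^ 2) := by ring

/-- A function with polynomial growth times `Efun` is integrable. -/
lemma integrable_mul_Efun (s t x₂ : ℝ) (hs : 0 < s) (ht : 0 < t)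
    (f : ℝ → ℝ) (hf : Continuous f) (C : ℝ) (m : ℕ)
    (hb : ∀ x, |f x| ≤ C * (1 + |x|) ^ m) :
    Integrable (fun x => f x * Efun s t x₂ x) := by
  obtain ⟨D, hD, hDle⟩ := master_bound m (show (0:ℝ) < 1/(2*t) by positivity)
  apply Integrable.mono' (g := fun x => (C * D) * Real.exp (-((1/(2*t))/2) * x ^ 2))
  · exact (integrable_exp_neg_mul_sq (by positivity)).const_mul _
  · exact (hf.mul (Efun_cont s t x₂)).aestronglyMeasurable
  · exact ae_of_all _ (norm_mul_Efun_le s t x₂ hs ht f C m hb D hDle)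

lemma tendsto_mul_Efun (s t x₂ : ℝ) (hs : 0 < s) (ht : 0 < t)
    (f : ℝ → ℝ) (C : ℝ) (m : ℕ)
    (hb : ∀ x, |f x| ≤ C * (1 + |x|) ^ m) :
    Tendsto (fun x => f x * Efun s t x₂ x) atTop (nhds 0) ∧
    Tendsto (fun x => f x * Efun s t x₂ x) atBot (nhds 0) := by
  obtain ⟨D, hD, hDle⟩ := master_bound m (show (0:ℝ) < 1/(2*t) by positivity)
  have hbd := norm_mul_Efun_le s t x₂ hs ht f C m hb D hDle
  constructor
  · apply squeeze_zero_norm hbd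
    simpa using (tendsto_exp_neg_sq_atTop (show (0:ℝ) < (1/(2*t))/2 by positivity)).const_mul (C*D)
  · apply squeeze_zero_norm hbd
    simpa using (tendsto_exp_neg_sq_atBot (show (0:ℝ) < (1/(2*t))/2 by positivity)).const_mul (C*D)

/-- The integral over `ℝ` of the derivative of an integrable-derivative function
vanishing at `±∞` is zero. -/
lemma integral_deriv_eq_zero (G G' : ℝ → ℝ) (hG : ∀ x, HasDerivAt G (G' x) x)
    (hint : Integrable G') (htop : Tendsto G atTop (nhds 0))
    (hbot : Tendsto G atBot (nhds 0)) : ∫ x : ℝ, G' x = 0 := by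
  have h1 : Tendsto (fun R : ℝ => ∫ x in (-R)..R, G' x) atTop (nhds (∫ x : ℝ, G' x)) :=
    intervalIntegral_tendsto_integral hint tendsto_neg_atTop_atBot tendsto_id
  have h2 : ∀ R : ℝ, ∫ x in (-R)..R, G' x = G R - G (-R) := fun R =>
    intervalIntegral.integral_eq_sub_of_hasDerivAt (fun x _ => hG x)
      hint.intervalIntegrable
  have h3 : Tendsto (fun R : ℝ => G R - G (-R)) atTop (nhds 0) := by
    simpa using htop.sub (hbot.comp tendsto_neg_atTop_atBot)
  rw [funext h2] at h1
  exact tendsto_nhds_unique h1 h3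

section main
variable {s t x₂ : ℝ}

lemma J0 (hs : 0 < s) (ht : 0 < t) :
    ∫ x : ℝ, Efun s t x₂ x
      = Real.sqrt (2*π*s*t/(s+t)) * Real.exp (-x₂^2/(2*(s+t))) := by
  have hst : (0:ℝ) < s + t := by linarith
  set a : ℝ := (s+t)/(2*s*t) with ha
  set b : ℝ := t*x₂/(s+t) with hb
  have hapos : 0 < a := by positivity
  have hEeq : ∀ x : ℝ, Efun s t x₂ x
      = Real.exp (-x₂^2/(2*(s+t))) * Real.exp (-a*(x-b)^2) := by
    intro x
    unfold Efun
    rw [← Real.exp_add]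
    congr 1
    rw [ha, hb]
    field_simp
    ring
  calc ∫ x : ℝ, Efun s t x₂ x
      = ∫ x : ℝ, Real.exp (-x₂^2/(2*(s+t))) * Real.exp (-a*(x-b)^2) := by
        simp_rw [hEeq]
    _ = Real.exp (-x₂^2/(2*(s+t))) * ∫ x : ℝ, Real.exp (-a*(x-b)^2) :=
        integral_const_mul _ _
    _ = Real.exp (-x₂^2/(2*(s+t))) * ∫ x : ℝ, Real.exp (-a*x^2) := by
        rw [integral_sub_right_eq_self (fun y => Real.exp (-a*y^2)) b]
    _ = Real.exp (-x₂^2/(2*(s+t))) * Real.sqrt (π/a) := by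
        rw [integral_gaussian]
    _ = Real.sqrt (2*π*s*t/(s+t)) * Real.exp (-x₂^2/(2*(s+t))) := by
        rw [mul_comm]
        congr 2
        rw [ha]
        field_simp

lemma ibp (hs : 0 < s) (ht : 0 < t) (f f' : ℝ → ℝ)
    (hf : ∀ x, HasDerivAt f (f' x) x) (hfc : Continuous f) (hf'c : Continuous f')
    (C C' : ℝ) (m m' : ℕ)
    (hbf : ∀ x, |f x| ≤ C * (1+|x|)^m) (hbf' : ∀ x, |f' x| ≤ C' * (1+|x|)^m') :
    ∫ x : ℝ, x * f x * Efun s t x₂ x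
      = (s*t/(s+t)) * ((x₂/s) * (∫ x : ℝ, f x * Efun s t x₂ x)
          + ∫ x : ℝ, f' x * Efun s t x₂ x) := by
  have hst : (0:ℝ) < s + t := by linarith
  have hC : 0 ≤ C := by
    have h0 := (abs_nonneg (f 0)).trans (hbf 0); simpa using h0
  -- bound for x * f x
  have hxf : ∀ x : ℝ, |x * f x| ≤ C * (1+|x|)^(m+1) := by
    intro x
    rw [abs_mul]
    calc |x| * |f x| ≤ (1+|x|) * (C * (1+|x|)^m) := by
          apply mul_le_mul (by linarith [abs_nonneg x]) (hbf x) (abs_nonneg _)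
            (by linarith [abs_nonneg x])
      _ = C * (1+|x|)^(m+1) := by ring
  -- bound for ((x₂-x)/s - x/t) * f x
  have hgf : ∀ x : ℝ, |((x₂-x)/s - x/t) * f x| ≤ ((|x₂|/s + 1/s + 1/t) * C) * (1+|x|)^(m+1) := by
    intro x
    rw [abs_mul]
    have h1 : |(x₂-x)/s - x/t| ≤ (|x₂|/s + 1/s + 1/t) * (1+|x|) := by
      have e1 : |(x₂-x)/s - x/t| ≤ |x₂|/s + |x|/s + |x|/t := by
        calc |(x₂-x)/s - x/t| ≤ |(x₂-x)/s| + |x/t| := abs_sub _ _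
          _ = |x₂ - x|/s + |x|/t := by
              rw [abs_div, abs_div, abs_of_pos hs, abs_of_pos ht]
          _ ≤ (|x₂| + |x|)/s + |x|/t := by
              have := abs_sub x₂ x
              gcongr
          _ = |x₂|/s + |x|/s + |x|/t := by ring
      have hx : (0:ℝ) ≤ |x| := abs_nonneg x
      have hx2 : (0:ℝ) ≤ |x₂| := abs_nonneg x₂
      have i1 : |x|/s ≤ (1/s) * (1+|x|) := by rw [div_le_iff₀ hs]; field_simp; linarith
      have i2 : |x|/t ≤ (1/t) * (1+|x|) := by rw [div_le_iff₀ ht]; field_simp; linarith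
      have i3 : |x₂|/s ≤ (|x₂|/s) * (1+|x|) := by
        nlinarith [div_nonneg hx2 hs.le]
      calc |(x₂-x)/s - x/t| ≤ |x₂|/s + |x|/s + |x|/t := e1
        _ ≤ (|x₂|/s) * (1+|x|) + (1/s) * (1+|x|) + (1/t) * (1+|x|) := by linarith
        _ = (|x₂|/s + 1/s + 1/t) * (1+|x|) := by ring
    calc |(x₂-x)/s - x/t| * |f x| ≤ ((|x₂|/s + 1/s + 1/t) * (1+|x|)) * (C * (1+|x|)^m) := by
          apply mul_le_mul h1 (hbf x) (abs_nonneg _) (by positivity)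
      _ = ((|x₂|/s + 1/s + 1/t) * C) * (1+|x|)^(m+1) := by ring
  have int1 : Integrable (fun x => f' x * Efun s t x₂ x) :=
    integrable_mul_Efun s t x₂ hs ht f' hf'c C' m' hbf'
  have int2 : Integrable (fun x => f x * Efun s t x₂ x) :=
    integrable_mul_Efun s t x₂ hs ht f hfc C m hbf
  have int3 : Integrable (fun x => x * f x * Efun s t x₂ x) :=
    integrable_mul_Efun s t x₂ hs ht (fun x => x * f x) (continuous_id.mul hfc) C (m+1) hxf
  have int4 : Integrable (fun x => ((x₂-x)/s - x/t) * f x * Efun s t x₂ x) :=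
    integrable_mul_Efun s t x₂ hs ht (fun x => ((x₂-x)/s - x/t) * f x)
      (((continuous_const.sub continuous_id).div_const s |>.sub
        (continuous_id.div_const t)).mul hfc) _ (m+1) hgf
  -- the derivative of G = f * E
  have hG : ∀ x, HasDerivAt (fun x => f x * Efun s t x₂ x)
      (f' x * Efun s t x₂ x + ((x₂-x)/s - x/t) * f x * Efun s t x₂ x) x := by
    intro x
    have h := (hf x).mul (Efun_hasDerivAt s t x₂ hs.ne' ht.ne' x)
    convert h using 1 <;> try rfl
    ring
  have htend := tendsto_mul_Efun s t x₂ hs ht f C m hbf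
  have hzero : ∫ x : ℝ, (f' x * Efun s t x₂ x + ((x₂-x)/s - x/t) * f x * Efun s t x₂ x) = 0 :=
    integral_deriv_eq_zero _ _ hG (int1.add int4) htend.1 htend.2
  rw [integral_add int1 int4] at hzero
  have hsplit : ∫ x : ℝ, ((x₂-x)/s - x/t) * f x * Efun s t x₂ x
      = (x₂/s) * (∫ x : ℝ, f x * Efun s t x₂ x)
        - (1/s + 1/t) * ∫ x : ℝ, x * f x * Efun s t x₂ x := by
    rw [← integral_const_mul, ← integral_const_mul, ← integral_sub (int2.const_mul _) (int3.const_mul _)]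
    congr 1
    funext x
    field_simp
    ring
  rw [hsplit] at hzero
  have key : x₂/s * (∫ x : ℝ, f x * Efun s t x₂ x) + (∫ x : ℝ, f' x * Efun s t x₂ x)
      = (1/s + 1/t) * ∫ x : ℝ, x * f x * Efun s t x₂ x := by linarith
  rw [key, ← mul_assoc]
  have h1 : (s*t/(s+t)) * (1/s + 1/t) = 1 := by field_simp; ring
  rw [h1, one_mul]

lemma K_bound_all (n : ℕ) (t : ℝ) : ∃ C : ℝ, 0 ≤ C ∧ ∀ x : ℝ, |K n t x| ≤ C * (1 + |x|) ^ n :=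
  K_bound n t

lemma Jn_eq (hs : 0 < s) (ht : 0 < t) (n : ℕ) :
    ∫ x : ℝ, K n t x * Efun s t x₂ x
      = (t/(s+t))^n * K n (s+t) x₂ * ∫ x : ℝ, Efun s t x₂ x := by
  induction n using Nat.twoStepInduction with
  | zero => simp
  | one =>
      have h := ibp (x₂ := x₂) hs ht (fun _ => (1:ℝ)) (fun _ => (0:ℝ))
        (fun x => hasDerivAt_const x 1) continuous_const continuous_const
        1 0 0 0 (fun x => by simp) (fun x => by simp)
      simp only [mul_one, one_mul, zero_mul, integral_zero, add_zero] at h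
      have hgoal : ∫ x : ℝ, K 1 t x * Efun s t x₂ x = ∫ x : ℝ, x * Efun s t x₂ x := by
        simp
      rw [hgoal]
      calc ∫ x : ℝ, x * Efun s t x₂ x
          = (s*t/(s+t)) * ((x₂/s) * (∫ x : ℝ, Efun s t x₂ x)) := h
        _ = (t/(s+t))^1 * K 1 (s+t) x₂ * ∫ x : ℝ, Efun s t x₂ x := by
            simp only [one_mul, K_one, pow_one]
            rw [← mul_assoc]
            congr 1
            field_simp
  | more n ih1 ih2 =>
      obtain ⟨C1, hC1, hb1⟩ := K_bound_all (n+1) t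
      obtain ⟨C0, hC0, hb0⟩ := K_bound_all n t
      have hb0' : ∀ x : ℝ, |((n:ℝ)+1) * K n t x| ≤ (((n:ℝ)+1) * C0) * (1 + |x|) ^ n := by
        intro x
        rw [abs_mul, abs_of_nonneg (show (0:ℝ) ≤ (n:ℝ)+1 by positivity)]
        rw [mul_assoc]
        exact mul_le_mul_of_nonneg_left (hb0 x) (by positivity)
      have hK1c := K_cont (n+1) t
      have hK0c := K_cont n t
      -- integrabilities
      have intK1 : Integrable (fun x => K (n+1) t x * Efun s t x₂ x) :=
        integrable_mul_Efun s t x₂ hs ht _ hK1c C1 (n+1) hb1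
      have intK0 : Integrable (fun x => K n t x * Efun s t x₂ x) :=
        integrable_mul_Efun s t x₂ hs ht _ hK0c C0 n hb0
      have intxK1 : Integrable (fun x => x * K (n+1) t x * Efun s t x₂ x) := by
        apply integrable_mul_Efun s t x₂ hs ht _ (continuous_id.mul hK1c) C1 (n+2)
        intro x
        show |x * K (n+1) t x| ≤ _
        rw [abs_mul]
        calc |x| * |K (n+1) t x| ≤ (1+|x|) * (C1 * (1+|x|)^(n+1)) := by
              apply mul_le_mul (by linarith [abs_nonneg x]) (hb1 x) (abs_nonneg _)
                (by linarith [abs_nonneg x])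
          _ = C1 * (1+|x|)^(n+2) := by ring
      -- step 1 : expand the recurrence inside the integral
      have hrec : ∫ x : ℝ, K (n+2) t x * Efun s t x₂ x
          = (∫ x : ℝ, x * K (n+1) t x * Efun s t x₂ x)
            - (((n:ℝ)+1) * t) * ∫ x : ℝ, K n t x * Efun s t x₂ x := by
        rw [← integral_const_mul, ← integral_sub intxK1 (intK0.const_mul _)]
        congr 1
        funext x
        rw [K_add_two]
        ring
      -- step 2 : integration by parts for the first integral
      have hibp := ibp (x₂ := x₂) hs ht (fun x => K (n+1) t x) (fun x => ((n:ℝ)+1) * K n t x)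
        (fun x => K_hasDerivAt n t x) hK1c (continuous_const.mul hK0c)
        C1 (((n:ℝ)+1) * C0) (n+1) n hb1 hb0'
      have hconst : ∫ x : ℝ, ((n:ℝ)+1) * K n t x * Efun s t x₂ x
          = ((n:ℝ)+1) * ∫ x : ℝ, K n t x * Efun s t x₂ x := by
        rw [← integral_const_mul]
        congr 1
        funext x
        ring
      rw [hconst] at hibp
      rw [hrec, hibp, ih1, ih2]
      rw [show n + 2 = (n+1)+1 from rfl, K_add_two]
      have hst : (0:ℝ) < s + t := by linarith
      rw [div_pow, div_pow, div_pow]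
      field_simp
      ring
end main





lemma derivative_hermite (n : ℕ) :
    Polynomial.derivative (Polynomial.hermite (n+1)) = ((n:ℤ)+1) • Polynomial.hermite n := by
  induction n using Nat.twoStepInduction with
  | zero => simp [Polynomial.hermite_one]
  | one =>
      have h2 : Polynomial.hermite 2 = Polynomial.X * Polynomial.X - 1 := by
        rw [Polynomial.hermite_succ, Polynomial.hermite_one]
        simp
      rw [h2]
      simp [Polynomial.hermite_one]
      ring
  | more n ih1 ih2 =>
      show Polynomial.derivative (Polynomial.hermite (n+1+1+1))
        = ((((n:ℤ)+2))+1) • Polynomial.hermite (n+1+1)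
      rw [Polynomial.hermite_succ (n+1+1), Polynomial.derivative_sub, Polynomial.derivative_mul,
        Polynomial.derivative_X, ih2, Polynomial.derivative_smul, ih1,
        Polynomial.hermite_succ (n+1), ih1]
      simp only [zsmul_eq_mul]
      push_cast
      ring

lemma aeval_hermite_eq_K (n : ℕ) (z : ℝ) :
    (Polynomial.aeval z) (Polynomial.hermite n) = K n 1 z := by
  induction n using Nat.twoStepInduction generalizing z with
  | zero => simp
  | one => simp [Polynomial.hermite_one]
  | more n ih1 ih2 =>
      rw [Polynomial.hermite_succ (n+1), map_sub, map_mul, Polynomial.aeval_X,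
        derivative_hermite, K_add_two, ih2]
      simp only [zsmul_eq_mul, map_mul, map_add, map_one, map_intCast, map_natCast]
      rw [ih1]
      push_cast
      ring

lemma K_scale (n : ℕ) {t : ℝ} (ht : 0 < t) (x : ℝ) :
    K n t x = (Real.sqrt t)^n * K n 1 (x / Real.sqrt t) := by
  have hst : (0:ℝ) < Real.sqrt t := Real.sqrt_pos.2 ht
  have hsq : Real.sqrt t * Real.sqrt t = t := Real.mul_self_sqrt ht.le
  induction n using Nat.twoStepInduction generalizing x with
  | zero => simp
  | one => simp [K_one]; field_simp
  | more n ih1 ih2 =>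
      have hx' : x / Real.sqrt t * Real.sqrt t = x := div_mul_cancel₀ x hst.ne'
      rw [K_add_two, K_add_two, ih1, ih2]
      linear_combination (-(Real.sqrt t^(n+1) * K (n+1) 1 (x / Real.sqrt t))) * hx'
        + (((n:ℝ)+1) * Real.sqrt t^n * K n 1 (x / Real.sqrt t)) * hsq

lemma hermiteH_eq_K (n : ℕ) {t : ℝ} (ht : 0 < t) (x : ℝ) :
    hermiteH n (x / Real.sqrt (2*t))
      = (Real.sqrt 2)^n * ((Real.sqrt t)^n)⁻¹ * K n t x := by
  have h2 : (0:ℝ) < 2 := two_pos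
  have hst : (0:ℝ) < Real.sqrt t := Real.sqrt_pos.2 ht
  have hs2 : (0:ℝ) < Real.sqrt 2 := Real.sqrt_pos.2 two_pos
  -- step 1: hermiteH in terms of aeval hermite
  have key : ∀ y : ℝ, hermiteH n y = (Real.sqrt 2)^n * (Polynomial.aeval (Real.sqrt 2 * y)) (Polynomial.hermite n) := by
    intro y
    unfold hermiteH
    have hcomp : (fun y : ℝ => Real.exp (-(y ^ 2)))
        = fun y : ℝ => (fun z => Real.exp (-(z^2/2))) (Real.sqrt 2 * y) := by
      funext z
      congr 1
      rw [mul_pow, Real.sq_sqrt h2.le]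
      ring
    have hcd : ContDiff ℝ n (fun z : ℝ => Real.exp (-(z^2/2))) := by
      apply Real.contDiff_exp.comp
      exact ((contDiff_id.pow 2).div_const 2).neg
    rw [hcomp, iteratedDeriv_comp_const_mul hcd]
    simp only [iteratedDeriv_eq_iterate, Polynomial.deriv_gaussian_eq_hermite_mul_gaussian]
    have hexp : Real.exp (y^2) * Real.exp (-((Real.sqrt 2 * y)^2/2)) = 1 := by
      rw [← Real.exp_add, mul_pow, Real.sq_sqrt h2.le]
      norm_num
    have hsgn : ((-1:ℝ))^n * ((-1:ℝ))^n = 1 := by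
      rw [← mul_pow]; norm_num
    linear_combination
      ((Real.sqrt 2)^n * ((Polynomial.aeval (Real.sqrt 2 * y)) (Polynomial.hermite n))
        * (((-1:ℝ))^n * ((-1:ℝ))^n)) * hexp
      + ((Real.sqrt 2)^n * ((Polynomial.aeval (Real.sqrt 2 * y)) (Polynomial.hermite n))) * hsgn
  have harg : Real.sqrt 2 * (x / Real.sqrt (2*t)) = x / Real.sqrt t := by
    rw [Real.sqrt_mul h2.le]
    field_simp
  rw [key, harg, aeval_hermite_eq_K]
  rw [K_scale n ht x]
  field_simp

lemma rpow_neg_half (n : ℕ) {t : ℝ} (ht : 0 < t) :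
    t ^ (-(((n : ℝ) + 1) / 2)) = ((Real.sqrt t) ^ (n+1))⁻¹ := by
  have h1 : ((Real.sqrt t) ^ (n+1) : ℝ) = t ^ ((((n:ℝ)) + 1) / 2) := by
    rw [Real.sqrt_eq_rpow, ← Real.rpow_natCast (t ^ ((1:ℝ)/2)) (n+1), ← Real.rpow_mul ht.le]
    congr 1
    push_cast
    ring
  rw [Real.rpow_neg ht.le, h1]

lemma phiT_eq (n : ℕ) {t : ℝ} (ht : 0 < t) (x : ℝ) :
    phiT n t x
      = ((Real.sqrt (Real.sqrt π * 2^n * n.factorial))⁻¹ * (Real.sqrt 2)⁻¹ * (Real.sqrt 2)^n)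
        * ((Real.sqrt t)^(2*n+1))⁻¹ * (K n t x * Real.exp (-(x^2)/(2*t))) := by
  have h2t : (0:ℝ) < 2*t := by linarith
  have hζ : (x / Real.sqrt (2*t))^2 = x^2/(2*t) := by
    rw [div_pow, Real.sq_sqrt h2t.le]
  have hexp : Real.exp (-(x^2)/(4*t)) * Real.exp (-((x/Real.sqrt (2*t))^2)/2)
      = Real.exp (-(x^2)/(2*t)) := by
    rw [hζ, ← Real.exp_add]
    congr 1
    field_simp
    ring
  unfold phiT hermiteFun
  rw [hermiteH_eq_K n ht x, rpow_neg_half n ht]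
  have hpow : ((Real.sqrt t)^(n+1))⁻¹ * ((Real.sqrt t)^n)⁻¹ = ((Real.sqrt t)^(2*n+1))⁻¹ := by
    rw [← mul_inv, ← pow_add, show n+1+n = 2*n+1 from by omega]
  linear_combination ((Real.sqrt 2)⁻¹ * ((Real.sqrt t)^(n+1))⁻¹
    * (Real.sqrt (Real.sqrt π * 2^n * n.factorial))⁻¹ * (Real.sqrt 2)^n * ((Real.sqrt t)^n)⁻¹
    * K n t x) * hexp


end Aux

/-- Invariance of `φ_n(t,x)` with respect to the heat kernel. -/
theorem phi_invariance (n : ℕ) (t₁ t₂ x₂ : ℝ) (h₁ : 0 < t₁) (h₂ : t₁ < t₂) :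
    ∫ x₁ : ℝ, heatKernel (t₂ - t₁) x₂ x₁ * phiT n t₁ x₁ = phiT n t₂ x₂ := by
  set s : ℝ := t₂ - t₁ with hsdef
  have hs : 0 < s := sub_pos.2 h₂
  have ht : 0 < t₁ := h₁
  have ht₂ : 0 < t₂ := lt_trans h₁ h₂
  have hsum : s + t₁ = t₂ := by rw [hsdef]; ring
  set C : ℝ := (Real.sqrt (Real.sqrt π * 2^n * n.factorial))⁻¹ * (Real.sqrt 2)⁻¹
    * (Real.sqrt 2)^n with hC
  have hker : ∀ x : ℝ, heatKernel s x₂ x * phiT n t₁ x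
      = ((Real.sqrt (2*π*s))⁻¹ * C * ((Real.sqrt t₁)^(2*n+1))⁻¹)
        * (K n t₁ x * Efun s t₁ x₂ x) := by
    intro x
    rw [phiT_eq n ht x]
    unfold heatKernel Efun
    rw [show -(x₂ - x)^2/(2*s) - x^2/(2*t₁) = -(x₂ - x)^2/(2*s) + (-(x^2)/(2*t₁)) by ring,
      Real.exp_add]
    ring
  calc ∫ x₁ : ℝ, heatKernel s x₂ x₁ * phiT n t₁ x₁
      = ∫ x₁ : ℝ, ((Real.sqrt (2*π*s))⁻¹ * C * ((Real.sqrt t₁)^(2*n+1))⁻¹)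
          * (K n t₁ x₁ * Efun s t₁ x₂ x₁) := by
        simp_rw [hker]
    _ = ((Real.sqrt (2*π*s))⁻¹ * C * ((Real.sqrt t₁)^(2*n+1))⁻¹)
          * ∫ x₁ : ℝ, K n t₁ x₁ * Efun s t₁ x₂ x₁ := integral_const_mul _ _
    _ = ((Real.sqrt (2*π*s))⁻¹ * C * ((Real.sqrt t₁)^(2*n+1))⁻¹)
          * ((t₁/(s+t₁))^n * K n (s+t₁) x₂
            * (Real.sqrt (2*π*s*t₁/(s+t₁)) * Real.exp (-x₂^2/(2*(s+t₁))))) := by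
        rw [Jn_eq hs ht n, J0 hs ht]
    _ = phiT n t₂ x₂ := by
        rw [hsum, phiT_eq n ht₂ x₂]
        have ha : Real.sqrt (2*π*s) = Real.sqrt (2*π) * Real.sqrt s := by
          rw [← Real.sqrt_mul (by positivity)]
        have hb : Real.sqrt (2*π*s*t₁/t₂)
            = Real.sqrt (2*π) * Real.sqrt s * Real.sqrt t₁ / Real.sqrt t₂ := by
          rw [show 2*π*s*t₁/t₂ = ((2*π)*s)*(t₁/t₂) by ring,
            Real.sqrt_mul (by positivity), Real.sqrt_mul (by positivity),
            Real.sqrt_div ht.le]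
          ring
        have hc1 : (t₁/t₂ : ℝ) = (Real.sqrt t₁/Real.sqrt t₂)^2 := by
          rw [div_pow, Real.sq_sqrt ht.le, Real.sq_sqrt ht₂.le]
        have hπ : (0:ℝ) < Real.sqrt (2*π) := Real.sqrt_pos.2 (by positivity)
        have hss : (0:ℝ) < Real.sqrt s := Real.sqrt_pos.2 hs
        have ht1s : (0:ℝ) < Real.sqrt t₁ := Real.sqrt_pos.2 ht
        have ht2s : (0:ℝ) < Real.sqrt t₂ := Real.sqrt_pos.2 ht₂
        have hconst : (Real.sqrt (2*π*s))⁻¹ * ((Real.sqrt t₁)^(2*n+1))⁻¹ * (t₁/t₂)^n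
              * Real.sqrt (2*π*s*t₁/t₂)
            = ((Real.sqrt t₂)^(2*n+1))⁻¹ := by
          rw [ha, hb, hc1]
          set a := Real.sqrt (2*π) with hadef
          set b := Real.sqrt s with hbdef
          set c := Real.sqrt t₁ with hcdef
          set d := Real.sqrt t₂ with hddef
          field_simp
          rw [div_pow, ← pow_mul, ← pow_mul, pow_succ, pow_succ]
          field_simp
        linear_combination (C * K n t₂ x₂ * Real.exp (-(x₂^2)/(2*t₂))) * hconst
end

section
/- Schur function expansion: for x = (x_1,...,x_N), y = (y_1,...,y_N) ∈ ℝ^N, det_{1≤j,k≤N}[e^{x_j y_k}] = h_N(x) h_N(y) Σ_{μ: ℓ(μ)≤N} s_μ(x) s_μ(y) / ∏_{k=1}^N Γ(μ_k + N - k + 1), where the sum runs over partitions μ of length at most N. -/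
open Real

/-- The Vandermonde product `h_N(x) = ∏_{j<k}(x_k - x_j)`. -/
noncomputable def vandermonde (N : ℕ) (x : Fin N → ℝ) : ℝ :=
  ∏ j : Fin N, ∏ k ∈ Finset.Ioi j, (x k - x j)

/-- The Schur function `s_μ(x) = det[x_j^{μ_k+N-k}] / det[x_j^{N-k}]`
(indices 0-based: the (j,k) entry is `x_j ^ (μ_k + (N-1-k))`). -/
noncomputable def schur (N : ℕ) (μ : Fin N → ℕ) (x : Fin N → ℝ) : ℝ :=
  Matrix.det (Matrix.of fun j k : Fin N => x j ^ (μ k + (N - 1 - (k : ℕ)))) /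
    Matrix.det (Matrix.of fun j k : Fin N => x j ^ (N - 1 - (k : ℕ)))

namespace SchurAux

open Finset Equiv Matrix

lemma real_exp_tsum (t : ℝ) : Real.exp t = ∑' n : ℕ, t ^ n / (Nat.factorial n : ℝ) := by
  rw [Real.exp_eq_exp_ℝ, NormedSpace.exp_eq_tsum_div]

lemma summable_abs_pi : ∀ {N : ℕ} (a : Fin N → ℕ → ℝ),
    (∀ k, Summable fun n => |a k n|) →
    Summable fun f : Fin N → ℕ => |∏ k, a k (f k)| := by
  intro N
  induction N with
  | zero =>
    intro a _
    exact (hasSum_single (f := fun f : Fin 0 → ℕ => |∏ k, a k (f k)|)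
      (fun _ => 0) (fun b hb => absurd (Subsingleton.elim b _) hb)).summable
  | succ n ih =>
    intro a h
    have key := Summable.mul_of_nonneg (h 0) (ih (fun k => a k.succ) (fun k => h k.succ))
      (fun m => abs_nonneg _) (fun f => abs_nonneg _)
    have key2 : Summable fun p : ℕ × (Fin n → ℕ) =>
        |∏ k : Fin (n + 1), a k ((Fin.cons p.1 p.2 : Fin (n + 1) → ℕ) k)| := by
      refine key.congr fun p => ?_
      rw [← abs_mul]
      congr 1
      rw [Fin.prod_univ_succ]
      simp
    exact (Equiv.summable_iff (Fin.consEquiv (fun _ : Fin (n + 1) => ℕ))).mp key2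

lemma tsum_prod_pi : ∀ {N : ℕ} (a : Fin N → ℕ → ℝ),
    (∀ k, Summable fun n => |a k n|) →
    ∑' f : Fin N → ℕ, ∏ k, a k (f k) = ∏ k : Fin N, ∑' n : ℕ, a k n := by
  intro N
  induction N with
  | zero =>
    intro a _
    rw [tsum_eq_single (fun _ => 0 : Fin 0 → ℕ)
      (fun b hb => absurd (Subsingleton.elim b _) hb)]
    simp
  | succ n ih =>
    intro a h
    rw [← Equiv.tsum_eq (Fin.consEquiv (fun _ : Fin (n + 1) => ℕ))]
    have h1 : ∀ p : ℕ × (Fin n → ℕ),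
        (∏ k : Fin (n + 1), a k ((Fin.consEquiv (fun _ : Fin (n + 1) => ℕ)) p k)) =
          a 0 p.1 * ∏ k : Fin n, a k.succ (p.2 k) := by
      intro p
      rw [Fin.prod_univ_succ]
      simp [Fin.consEquiv]
    rw [tsum_congr h1, Fin.prod_univ_succ, ← ih (fun k => a k.succ) (fun k => h k.succ)]
    have hf0 : Summable fun n : ℕ => ‖a 0 n‖ :=
      (h 0).congr fun n => (Real.norm_eq_abs _).symm
    have hg0 : Summable fun f : Fin n → ℕ => ‖∏ k : Fin n, a k.succ (f k)‖ :=
      (summable_abs_pi (fun k => a k.succ) (fun k => h k.succ)).congr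
        fun f => (Real.norm_eq_abs _).symm
    exact (tsum_mul_tsum_of_summable_norm hf0 hg0).symm

variable (N : ℕ) (x y : Fin N → ℝ)

/-- The coefficient of the expansion indexed by `f : Fin N → ℕ`. -/
noncomputable def cfun (f : Fin N → ℕ) : ℝ :=
  (∏ k, y k ^ (f k) / (Nat.factorial (f k) : ℝ)) *
    Matrix.det (Matrix.of fun j k : Fin N => x j ^ (f k))

lemma summable_perm_term (σ : Equiv.Perm (Fin N)) :
    Summable fun f : Fin N → ℕ =>
      |∏ k, (x (σ k) * y k) ^ (f k) / (Nat.factorial (f k) : ℝ)| := by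
  refine summable_abs_pi (fun k n => (x (σ k) * y k) ^ n / (Nat.factorial n : ℝ)) fun k => ?_
  refine (Real.summable_pow_div_factorial |x (σ k) * y k|).congr fun n => ?_
  rw [abs_div, abs_pow, Nat.abs_cast]

lemma sum_sign_prod (f : Fin N → ℕ) :
    ∑ σ : Equiv.Perm (Fin N),
      ((Equiv.Perm.sign σ : ℤ) : ℝ) *
        ∏ k, (x (σ k) * y k) ^ (f k) / (Nat.factorial (f k) : ℝ) =
      cfun N x y f := by
  rw [cfun, Matrix.det_apply', Finset.mul_sum]
  refine Finset.sum_congr rfl fun σ _ => ?_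
  have h1 : ∏ k, (x (σ k) * y k) ^ (f k) / (Nat.factorial (f k) : ℝ) =
      (∏ k, x (σ k) ^ (f k)) * ∏ k, (y k ^ (f k) / (Nat.factorial (f k) : ℝ)) := by
    rw [← Finset.prod_mul_distrib]
    refine Finset.prod_congr rfl fun k _ => ?_
    rw [mul_pow]; ring
  rw [h1]
  simp only [Matrix.of_apply]
  ring

lemma summable_cfun : Summable (cfun N x y) := by
  have hσ : ∀ σ : Equiv.Perm (Fin N),
      Summable fun f : Fin N → ℕ =>
        ((Equiv.Perm.sign σ : ℤ) : ℝ) *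
          ∏ k, (x (σ k) * y k) ^ (f k) / (Nat.factorial (f k) : ℝ) :=
    fun σ => ((summable_perm_term N x y σ).of_abs).mul_left _
  have hs := summable_sum (s := (Finset.univ : Finset (Equiv.Perm (Fin N))))
    fun σ _ => hσ σ
  exact hs.congr fun f => sum_sign_prod N x y f

lemma detExp :
    Matrix.det (Matrix.of fun j k : Fin N => Real.exp (x j * y k)) =
      ∑' f : Fin N → ℕ, cfun N x y f := by
  rw [Matrix.det_apply']
  have h1 : ∀ σ : Equiv.Perm (Fin N),
      ∏ k, Real.exp (x (σ k) * y k) =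
        ∑' f : Fin N → ℕ, ∏ k, (x (σ k) * y k) ^ (f k) / (Nat.factorial (f k) : ℝ) := by
    intro σ
    rw [tsum_prod_pi (fun k n => (x (σ k) * y k) ^ n / (Nat.factorial n : ℝ))
      (fun k => by
        refine (Real.summable_pow_div_factorial |x (σ k) * y k|).congr fun n => ?_
        rw [abs_div, abs_pow, Nat.abs_cast])]
    exact Finset.prod_congr rfl fun k _ => real_exp_tsum _
  calc
    ∑ σ : Equiv.Perm (Fin N), ((Equiv.Perm.sign σ : ℤ) : ℝ) *
        ∏ k, (Matrix.of fun j k : Fin N => Real.exp (x j * y k)) (σ k) k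
      = ∑ σ : Equiv.Perm (Fin N),
          ∑' f : Fin N → ℕ, ((Equiv.Perm.sign σ : ℤ) : ℝ) *
            ∏ k, (x (σ k) * y k) ^ (f k) / (Nat.factorial (f k) : ℝ) := by
        refine Finset.sum_congr rfl fun σ _ => ?_
        simp only [Matrix.of_apply]
        rw [h1 σ, tsum_mul_left]
    _ = ∑' f : Fin N → ℕ, ∑ σ : Equiv.Perm (Fin N),
          ((Equiv.Perm.sign σ : ℤ) : ℝ) *
            ∏ k, (x (σ k) * y k) ^ (f k) / (Nat.factorial (f k) : ℝ) := by
        refine (Summable.tsum_finsetSum fun σ _ => ?_).symm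
        exact ((summable_perm_term N x y σ).of_abs).mul_left _
    _ = ∑' f : Fin N → ℕ, cfun N x y f := tsum_congr fun f => sum_sign_prod N x y f

/-- `λ_k = μ_k + (N-1-k)`. -/
def lamF (μ : Fin N → ℕ) : Fin N → ℕ := fun k => μ k + (N - 1 - (k : ℕ))

lemma lam_strictAnti {μ : Fin N → ℕ} (h : Antitone μ) : StrictAnti (lamF N μ) := by
  intro k l hkl
  have h1 : μ l ≤ μ k := h hkl.le
  have h2 : (k : ℕ) < l := hkl
  have h3 : (l : ℕ) < N := l.isLt
  simp only [lamF]
  omega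

lemma strictAnti_gap (g : Fin N → ℕ) (hg : StrictAnti g) :
    ∀ (m : ℕ) (hm : m < N) (k : Fin N), (k : ℕ) ≤ m → g ⟨m, hm⟩ + (m - (k : ℕ)) ≤ g k := by
  intro m
  induction m with
  | zero =>
    intro hm k hk
    have hk0 : (k : ℕ) = 0 := Nat.le_zero.mp hk
    have hkk : k = ⟨0, hm⟩ := Fin.ext (by rw [hk0])
    subst hkk
    simp
  | succ m ih =>
    intro hm k hk
    by_cases hk' : (k : ℕ) = m + 1
    · have hkk : k = ⟨m + 1, hm⟩ := Fin.ext hk'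
      subst hkk
      simp
    · have h1 := ih (by omega) k (by omega)
      have h2 : g ⟨m + 1, hm⟩ < g ⟨m, by omega⟩ :=
        hg (show (⟨m, by omega⟩ : Fin N) < ⟨m + 1, hm⟩ by
          simp [Fin.lt_def])
      omega

lemma perm_strictMono (τ : Equiv.Perm (Fin N)) (h : StrictMono (τ : Fin N → Fin N)) :
    ∀ j, τ j = j := by
  intro j
  have heq := congrArg (fun e : Fin N ≃o Fin N => e j)
    (Subsingleton.elim (StrictMono.orderIsoOfSurjective _ h (Equiv.surjective τ))
      (OrderIso.refl _))
  simpa using heq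

/-- The reindexing map. -/
def Phi : {f : Fin N → ℕ // Antitone f} × Equiv.Perm (Fin N) → (Fin N → ℕ) :=
  fun p k => lamF N p.1.1 (p.2 k)

lemma Phi_inj : Function.Injective (Phi N) := by
  rintro ⟨⟨μ, hμ⟩, σ⟩ ⟨⟨μ', hμ'⟩, σ'⟩ h
  have h' : ∀ k, lamF N μ (σ k) = lamF N μ' (σ' k) := fun k => congrFun h k
  set τ : Equiv.Perm (Fin N) := σ.symm.trans σ' with hτdef
  have hτ1 : ∀ j, lamF N μ j = lamF N μ' (τ j) := by
    intro j
    have hj := h' (σ.symm j)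
    simpa [hτdef, Equiv.trans_apply] using hj
  have hmono : StrictMono (τ : Fin N → Fin N) := by
    intro j j' hjj
    have hlt : lamF N μ j' < lamF N μ j := lam_strictAnti N hμ hjj
    rw [hτ1 j, hτ1 j'] at hlt
    exact (lam_strictAnti N hμ').lt_iff_gt.mp hlt
  have hτid := perm_strictMono N τ hmono
  have hμeq : μ = μ' := by
    funext k
    have hk := hτ1 k
    rw [hτid k] at hk
    simp only [lamF] at hk
    omega
  subst hμeq
  have hσ : σ = σ' := Equiv.ext fun k => (lam_strictAnti N hμ).injective (h' k)
  subst hσ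
  rfl

lemma cfun_eq_zero_of_not_mem {f : Fin N → ℕ} (hf : f ∉ Set.range (Phi N)) :
    cfun N x y f = 0 := by
  by_cases hinj : Function.Injective f
  · exfalso
    apply hf
    set σ₀ := Tuple.sort f with hσ₀
    have hmono : Monotone (f ∘ σ₀) := Tuple.monotone_sort f
    have hsm : StrictMono (f ∘ σ₀) := hmono.strictMono_of_injective (hinj.comp σ₀.injective)
    set g : Fin N → ℕ := fun k => f (σ₀ (Fin.rev k)) with hg
    have hganti : StrictAnti g := by
      intro k l hkl
      exact hsm (Fin.rev_lt_rev.mpr hkl)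
    have hge : ∀ k : Fin N, (N - 1 - (k : ℕ)) ≤ g k := by
      intro k
      have hpos : 0 < N := k.pos
      have h1 := strictAnti_gap N g hganti (N - 1) (by omega) k (by have := k.isLt; omega)
      omega
    set μ : Fin N → ℕ := fun k => g k - (N - 1 - (k : ℕ)) with hμ
    have hμa : Antitone μ := by
      intro k l hkl
      rcases eq_or_lt_of_le hkl with rfl | hlt
      · exact le_rfl
      have hgap := strictAnti_gap N g hganti (l : ℕ) l.isLt k hlt.le
      have hgel := hge l
      have hkl' : (k : ℕ) < (l : ℕ) := hlt
      have hlN : (l : ℕ) < N := l.isLt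
      have hcongr : g ⟨(l : ℕ), l.isLt⟩ = g l := by congr 1
      rw [hcongr] at hgap
      simp only [hμ]
      omega
    have hlam : lamF N μ = g := by
      funext k
      have := hge k
      simp only [lamF, hμ]
      omega
    refine ⟨⟨⟨μ, hμa⟩, σ₀.symm.trans Fin.revPerm⟩, ?_⟩
    funext k
    show lamF N μ (Fin.revPerm (σ₀.symm k)) = f k
    rw [hlam]
    have hrev : (Fin.revPerm (σ₀.symm k) : Fin N) = Fin.rev (σ₀.symm k) := rfl
    rw [hrev]
    simp [hg, Fin.rev_rev]
  · rw [Function.not_injective_iff] at hinj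
    obtain ⟨a, b, hab, hne⟩ := hinj
    rw [cfun]
    have hdet : Matrix.det (Matrix.of fun j k : Fin N => x j ^ (f k)) = 0 := by
      refine Matrix.det_zero_of_column_eq hne fun j => ?_
      simp [hab]
    rw [hdet, mul_zero]

lemma sum_perm_eq (L : Fin N → ℕ) :
    ∑ σ : Equiv.Perm (Fin N), cfun N x y (fun k => L (σ k)) =
      Matrix.det (Matrix.of fun j k : Fin N => x j ^ (L k)) *
        Matrix.det (Matrix.of fun j k : Fin N => y j ^ (L k)) /
          ∏ k, (Nat.factorial (L k) : ℝ) := by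
  have hdetx : ∀ σ : Equiv.Perm (Fin N),
      Matrix.det (Matrix.of fun j k : Fin N => x j ^ (L (σ k))) =
        ((Equiv.Perm.sign σ : ℤ) : ℝ) *
          Matrix.det (Matrix.of fun j k : Fin N => x j ^ (L k)) := by
    intro σ
    have h0 : (Matrix.of fun j k : Fin N => x j ^ (L (σ k))) =
        (Matrix.of fun j k : Fin N => x j ^ (L k)).submatrix id σ := rfl
    rw [h0, Matrix.det_permute']
  have hfact : ∀ σ : Equiv.Perm (Fin N),
      (∏ k, (Nat.factorial (L (σ k)) : ℝ)) = ∏ k, (Nat.factorial (L k) : ℝ) :=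
    fun σ => Equiv.prod_comp σ (fun k => (Nat.factorial (L k) : ℝ))
  have hdety : Matrix.det (Matrix.of fun j k : Fin N => y j ^ (L k)) =
      ∑ σ : Equiv.Perm (Fin N), ((Equiv.Perm.sign σ : ℤ) : ℝ) * ∏ k, y k ^ (L (σ k)) := by
    rw [← Matrix.det_transpose, Matrix.det_apply']
    exact Finset.sum_congr rfl fun σ _ => rfl
  have step : ∀ σ : Equiv.Perm (Fin N),
      cfun N x y (fun k => L (σ k)) =
        (Matrix.det (Matrix.of fun j k : Fin N => x j ^ (L k)) /
            ∏ k, (Nat.factorial (L k) : ℝ)) *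
          (((Equiv.Perm.sign σ : ℤ) : ℝ) * ∏ k, y k ^ (L (σ k))) := by
    intro σ
    rw [cfun, hdetx σ]
    have h2 : (∏ k, y k ^ (L (σ k)) / (Nat.factorial (L (σ k)) : ℝ)) =
        (∏ k, y k ^ (L (σ k))) / ∏ k, (Nat.factorial (L k) : ℝ) := by
      rw [Finset.prod_div_distrib, hfact σ]
    rw [h2]
    ring
  rw [Finset.sum_congr rfl fun σ _ => step σ, ← Finset.mul_sum, ← hdety]
  ring

lemma tsum_c_eq :
    ∑' f : Fin N → ℕ, cfun N x y f =
      ∑' μ : {f : Fin N → ℕ // Antitone f},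
        Matrix.det (Matrix.of fun j k : Fin N => x j ^ (lamF N μ.1 k)) *
          Matrix.det (Matrix.of fun j k : Fin N => y j ^ (lamF N μ.1 k)) /
            ∏ k, (Nat.factorial (lamF N μ.1 k) : ℝ) := by
  have hsupp : Function.support (cfun N x y) ⊆ Set.range (Phi N) := by
    intro f hf
    by_contra hmem
    exact Function.mem_support.mp hf (cfun_eq_zero_of_not_mem N x y hmem)
  rw [← Function.Injective.tsum_eq (Phi_inj N) hsupp]
  rw [Summable.tsum_prod' (f := fun p : {f : Fin N → ℕ // Antitone f} × Equiv.Perm (Fin N) =>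
      cfun N x y (Phi N p))
    ((summable_cfun N x y).comp_injective (Phi_inj N))
    (fun μ => Summable.of_finite)]
  refine tsum_congr fun μ => ?_
  rw [tsum_fintype]
  exact sum_perm_eq N x y (lamF N μ.1)

lemma den_eq :
    Matrix.det (Matrix.of fun j k : Fin N => x j ^ (N - 1 - (k : ℕ))) =
      ((Equiv.Perm.sign (Fin.revPerm : Equiv.Perm (Fin N)) : ℤ) : ℝ) * vandermonde N x := by
  have h1 : (Matrix.of fun j k : Fin N => x j ^ (N - 1 - (k : ℕ))) =
      (Matrix.vandermonde x).submatrix id (Fin.revPerm : Equiv.Perm (Fin N)) := by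
    ext j k
    simp only [Matrix.of_apply, Matrix.submatrix_apply, Matrix.vandermonde_apply, id_eq]
    congr 1
    have hrev : (Fin.revPerm k : Fin N) = Fin.rev k := rfl
    rw [hrev, Fin.val_rev]
    omega
  rw [h1, Matrix.det_permute', Matrix.det_vandermonde]
  rfl

end SchurAux

/-- Schur function expansion of `det[e^{x_j y_k}]`; partitions of length at most `N`
are encoded as antitone functions `μ : Fin N → ℕ`. -/
theorem schur_expansion (N : ℕ) (x y : Fin N → ℝ) :
    Matrix.det (Matrix.of fun j k : Fin N => Real.exp (x j * y k)) =
      vandermonde N x * vandermonde N y *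
        ∑' μ : {f : Fin N → ℕ // Antitone f},
          schur N μ.1 x * schur N μ.1 y /
            ∏ k : Fin N, Real.Gamma ((μ.1 k : ℝ) + N - (k : ℕ)) := by
  by_cases hx : vandermonde N x = 0
  · rw [hx, zero_mul, zero_mul]
    rw [vandermonde, Finset.prod_eq_zero_iff] at hx
    obtain ⟨j, -, hj⟩ := hx
    rw [Finset.prod_eq_zero_iff] at hj
    obtain ⟨k, hk, hjk⟩ := hj
    have hxe : x j = x k := by linarith [sub_eq_zero.mp hjk]
    refine Matrix.det_zero_of_row_eq (Finset.mem_Ioi.mp hk).ne' ?_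
    funext l
    simp [hxe]
  by_cases hy : vandermonde N y = 0
  · rw [hy, mul_zero, zero_mul]
    rw [vandermonde, Finset.prod_eq_zero_iff] at hy
    obtain ⟨j, -, hj⟩ := hy
    rw [Finset.prod_eq_zero_iff] at hj
    obtain ⟨k, hk, hjk⟩ := hj
    have hye : y j = y k := by linarith [sub_eq_zero.mp hjk]
    refine Matrix.det_zero_of_column_eq (Finset.mem_Ioi.mp hk).ne' fun l => ?_
    simp [hye]
  rw [SchurAux.detExp N x y, SchurAux.tsum_c_eq N x y, ← tsum_mul_left]
  refine tsum_congr fun μ => ?_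
  have hε := Int.units_eq_one_or (Equiv.Perm.sign (Fin.revPerm : Equiv.Perm (Fin N)))
  set ε : ℝ := ((Equiv.Perm.sign (Fin.revPerm : Equiv.Perm (Fin N)) : ℤ) : ℝ) with hεdef
  have hε2 : ε * ε = 1 := by
    rcases hε with h | h <;> simp [hεdef, h]
  have hεne : ε ≠ 0 := by
    rcases hε with h | h <;> simp [hεdef, h]
  have hΓ : (∏ k : Fin N, Real.Gamma ((μ.1 k : ℝ) + N - (k : ℕ))) =
      ∏ k, (Nat.factorial (SchurAux.lamF N μ.1 k) : ℝ) := by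
    refine Finset.prod_congr rfl fun k _ => ?_
    have hnat : SchurAux.lamF N μ.1 k + (k : ℕ) + 1 = μ.1 k + N := by
      have := k.isLt
      simp only [SchurAux.lamF]
      omega
    have hcast : ((SchurAux.lamF N μ.1 k : ℕ) : ℝ) + 1 = (μ.1 k : ℝ) + N - (k : ℕ) := by
      have hc := congrArg (Nat.cast : ℕ → ℝ) hnat
      push_cast at hc
      linarith
    rw [← hcast, Real.Gamma_nat_eq_factorial]
  have hschx : schur N μ.1 x =
      Matrix.det (Matrix.of fun j k : Fin N => x j ^ (SchurAux.lamF N μ.1 k)) /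
        (ε * vandermonde N x) := by
    rw [schur, SchurAux.den_eq N x]
    rfl
  have hschy : schur N μ.1 y =
      Matrix.det (Matrix.of fun j k : Fin N => y j ^ (SchurAux.lamF N μ.1 k)) /
        (ε * vandermonde N y) := by
    rw [schur, SchurAux.den_eq N y]
    rfl
  rw [hschx, hschy, hΓ]
  have hF : (∏ k, (Nat.factorial (SchurAux.lamF N μ.1 k) : ℝ)) ≠ 0 := by
    refine ne_of_gt (Finset.prod_pos fun k _ => ?_)
    exact_mod_cast Nat.factorial_pos _
  set Dx := Matrix.det (Matrix.of fun j k : Fin N => x j ^ (SchurAux.lamF N μ.1 k))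
  set Dy := Matrix.det (Matrix.of fun j k : Fin N => y j ^ (SchurAux.lamF N μ.1 k))
  set F := ∏ k, (Nat.factorial (SchurAux.lamF N μ.1 k) : ℝ)
  have hden : (ε * vandermonde N x) * (ε * vandermonde N y) =
      vandermonde N x * vandermonde N y := by
    calc (ε * vandermonde N x) * (ε * vandermonde N y)
        = (ε * ε) * (vandermonde N x * vandermonde N y) := by ring
      _ = vandermonde N x * vandermonde N y := by rw [hε2, one_mul]
  have h1 : Dx / (ε * vandermonde N x) * (Dy / (ε * vandermonde N y)) =
      Dx * Dy / (vandermonde N x * vandermonde N y) := by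
    rw [div_mul_div_comm, hden]
  rw [h1]
  field_simp
end

section
/- Selberg-type Gaussian integral with Vandermonde squared: for t > 0, ∫_{W_N} e^{-|x|²/(2t)} (h_N(x))² dx = C_N t^{N²/2}, where W_N = {x ∈ ℝ^N : x_1 < x_2 < ... < x_N}, h_N(x) = ∏_{j<k}(x_k - x_j), and C_N = (2π)^{N/2} ∏_{j=1}^N Γ(j). -/
open MeasureTheory Real

open Polynomial Filter Topology Matrix


noncomputable def gw (x : ℝ) : ℝ := Real.exp (-(x ^ 2 / 2))

lemma integrable_poly_gw (P : ℝ[X]) : Integrable (fun x => P.eval x * gw x) := by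
  induction P using Polynomial.induction_on' with
  | monomial n c =>
      simp only [eval_monomial]
      have h : Integrable (fun x : ℝ => x ^ (n : ℝ) * Real.exp (-(1/2 : ℝ) * x ^ 2)) :=
        integrable_rpow_mul_exp_neg_mul_sq (by norm_num) (lt_of_lt_of_le (by norm_num) (Nat.cast_nonneg n))
      simp_rw [Real.rpow_natCast] at h
      have := h.const_mul c
      refine this.congr' ?_ ?_
      · exact (Continuous.mul (by continuity) (by fun_prop : Continuous fun x : ℝ => Real.exp (-(x^2/2)))).aestronglyMeasurable
      · refine Filter.Eventually.of_forall fun x => ?_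
        simp [gw]; ring_nf
  | add p q hp hq =>
      simpa [add_mul] using (hp.add hq : Integrable (fun x => eval x p * gw x + eval x q * gw x))

lemma tendsto_poly_gw_atTop (P : ℝ[X]) :
    Tendsto (fun x => P.eval x * gw x) atTop (𝓝 0) := by
  apply squeeze_zero_norm' (a := fun x => |P.eval x / Real.exp x|)
  · filter_upwards [eventually_ge_atTop (2:ℝ)] with x hx
    have h1 : Real.exp (-(x ^ 2 / 2)) ≤ Real.exp (-x) := by
      apply Real.exp_le_exp.2; nlinarith
    have : ‖P.eval x * gw x‖ = |P.eval x| * Real.exp (-(x^2/2)) := by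
      rw [norm_mul]; simp [gw, abs_of_pos (Real.exp_pos _)]
    rw [this, abs_div]
    calc |P.eval x| * Real.exp (-(x^2/2)) ≤ |P.eval x| * Real.exp (-x) :=
          mul_le_mul_of_nonneg_left h1 (abs_nonneg _)
      _ = |P.eval x| / |Real.exp x| := by
          rw [Real.exp_neg, div_eq_mul_inv, abs_of_pos (Real.exp_pos _)]
  · simpa using (P.tendsto_div_exp_atTop).abs

lemma tendsto_poly_gw_atBot (P : ℝ[X]) :
    Tendsto (fun x => P.eval x * gw x) atBot (𝓝 0) := by
  have h := tendsto_poly_gw_atTop (P.comp (-X))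
  have h2 : Tendsto ((fun x => P.eval x * gw x) ∘ (fun y : ℝ => -y)) atTop (𝓝 0) := by
    refine h.congr fun x => ?_
    simp [gw, Function.comp]
  have := h2.comp tendsto_neg_atBot_atTop
  refine this.congr fun x => ?_
  simp [Function.comp]

lemma integral_deriv_eq_zero' (F F' : ℝ → ℝ) (hd : ∀ x, HasDerivAt F (F' x) x)
    (hi : Integrable F') (ht : Tendsto F atTop (𝓝 0)) (hb : Tendsto F atBot (𝓝 0)) :
    ∫ x, F' x = 0 := by
  have h1 : ∫ x in Set.Iic 0, F' x = F 0 - 0 :=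
    integral_Iic_of_hasDerivAt_of_tendsto' (fun x _ => hd x) hi.integrableOn hb
  have h2 : ∫ x in Set.Ioi 0, F' x = 0 - F 0 :=
    integral_Ioi_of_hasDerivAt_of_tendsto' (fun x _ => hd x) hi.integrableOn ht
  rw [← intervalIntegral.integral_Iic_add_Ioi (b := (0:ℝ)) hi.integrableOn hi.integrableOn, h1, h2]
  ring

lemma hermite_derivative (n : ℕ) :
    derivative (hermite n) = (n : ℕ) • hermite (n - 1) := by
  induction n with
  | zero => simp [hermite_zero]
  | succ n ih =>
      rw [hermite_succ, derivative_sub, derivative_mul, derivative_X, one_mul]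
      cases n with
      | zero => simp [hermite_zero, hermite_one]
      | succ m =>
          rw [ih, derivative_smul, mul_smul_comm]
          simp only [Nat.add_sub_cancel]
          rw [add_sub_assoc, ← smul_sub, ← hermite_succ]
          conv_rhs => rw [succ_nsmul]
          exact add_comm (hermite (m+1)) ((m+1) • hermite (m+1))

noncomputable def hr (n : ℕ) : ℝ[X] := (hermite n).map (Int.castRingHom ℝ)

lemma hr_succ (n : ℕ) : hr (n+1) = X * hr n - derivative (hr n) := by
  unfold hr
  rw [hermite_succ, Polynomial.map_sub, Polynomial.map_mul, Polynomial.map_X, derivative_map]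

lemma hr_derivative (n : ℕ) : derivative (hr n) = (n : ℕ) • hr (n - 1) := by
  unfold hr
  rw [derivative_map, hermite_derivative]
  simp [nsmul_eq_mul]

lemma hasDerivAt_gw (x : ℝ) : HasDerivAt gw (-x * gw x) x := by
  have h1 : HasDerivAt (fun y : ℝ => -(y ^ 2 / 2)) (-x) x := by
    have := ((hasDerivAt_pow 2 x).div_const 2).neg
    refine this.congr_deriv ?_
    norm_num
  unfold gw
  simpa [mul_comm] using h1.exp

lemma hasDerivAt_hr_gw (n : ℕ) (x : ℝ) :
    HasDerivAt (fun y => (hr n).eval y * gw y) (-((hr (n+1)).eval x * gw x)) x := by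
  have hp : HasDerivAt (fun y : ℝ => (hr n).eval y) ((derivative (hr n)).eval x) x :=
    (hr n).hasDerivAt x
  have := hp.mul (hasDerivAt_gw x)
  refine this.congr_deriv ?_
  rw [hr_succ]
  simp only [eval_sub, eval_mul, eval_X]
  ring

noncomputable def HI (m n : ℕ) : ℝ := ∫ x, (hr m).eval x * ((hr n).eval x * gw x)

lemma integrable_hr_hr (m n : ℕ) :
    Integrable (fun x => (hr m).eval x * ((hr n).eval x * gw x)) := by
  refine (integrable_poly_gw (hr m * hr n)).congr (Filter.Eventually.of_forall fun x => ?_)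
  simp only [eval_mul]; ring

lemma HI_comm (m n : ℕ) : HI m n = HI n m := by
  unfold HI
  exact integral_congr_ae (Filter.Eventually.of_forall fun x => by ring)

lemma HI_rec (m n : ℕ) : HI m (n+1) = m * HI (m-1) n := by
  have hd : ∀ x : ℝ, HasDerivAt (fun y => (hr m).eval y * ((hr n).eval y * gw y))
      ((m:ℝ) * ((hr (m-1)).eval x * ((hr n).eval x * gw x))
        - (hr m).eval x * ((hr (n+1)).eval x * gw x)) x := by
    intro x
    have h1 : HasDerivAt (fun y : ℝ => (hr m).eval y) ((derivative (hr m)).eval x) x :=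
      (hr m).hasDerivAt x
    have := h1.mul (hasDerivAt_hr_gw n x)
    refine this.congr_deriv ?_
    rw [hr_derivative]
    simp only [eval_smul, smul_eq_mul, nsmul_eq_mul, eval_natCast, eval_mul]
    ring
  have hi1 := (integrable_hr_hr (m-1) n).const_mul (m:ℝ)
  have hi2 := integrable_hr_hr m (n+1)
  have htT : Tendsto (fun x => (hr m).eval x * ((hr n).eval x * gw x)) atTop (𝓝 0) := by
    refine (tendsto_poly_gw_atTop (hr m * hr n)).congr fun x => ?_
    simp only [eval_mul]; ring
  have htB : Tendsto (fun x => (hr m).eval x * ((hr n).eval x * gw x)) atBot (𝓝 0) := by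
    refine (tendsto_poly_gw_atBot (hr m * hr n)).congr fun x => ?_
    simp only [eval_mul]; ring
  have hz := integral_deriv_eq_zero' _ _ hd (hi1.sub hi2) htT htB
  rw [integral_sub hi1 hi2, integral_const_mul] at hz
  unfold HI
  linarith

lemma HI_zero_zero : HI 0 0 = Real.sqrt (2*π) := by
  have h : HI 0 0 = ∫ x : ℝ, Real.exp (-(1/2 : ℝ) * x^2) := by
    unfold HI
    refine integral_congr_ae (Filter.Eventually.of_forall fun x => ?_)
    simp only [hr, hermite_zero, Polynomial.map_C, eval_C, Int.cast_one, one_pow, one_mul, gw, _root_.map_one, Polynomial.map_one, eval_one]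
    ring_nf
  rw [h, integral_gaussian]
  rw [show π / (1/2 : ℝ) = 2 * π by ring]

lemma HI_eq : ∀ n m : ℕ, HI m n = if m = n then Real.sqrt (2*π) * (Nat.factorial m) else 0 := by
  intro n
  induction n with
  | zero =>
      intro m
      cases m with
      | zero => simp [HI_zero_zero]
      | succ k =>
          rw [HI_comm, HI_rec]
          simp
  | succ n ih =>
      intro m
      cases m with
      | zero =>
          rw [HI_rec]
          simp
      | succ k =>
          rw [HI_rec, Nat.add_sub_cancel, ih k]
          by_cases h : k = n
          · subst h
            simp [Nat.factorial_succ]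
            ring
          · simp [h, fun hh => h (Nat.succ_injective hh)]

lemma det_hr_eq (N : ℕ) (x : Fin N → ℝ) :
    (Matrix.of fun i j : Fin N => (hr i).eval (x j)).det = vandermonde N x := by
  have hdeg : ∀ i : Fin N, (hr i).natDegree < N := by
    intro i
    refine lt_of_le_of_lt (le_trans (natDegree_map_le) ?_) i.isLt
    rw [natDegree_hermite]
  have key : (Matrix.of fun i j : Fin N => (hr i).eval (x j)) =
      (Matrix.of fun i k : Fin N => (hr i).coeff k) * (Matrix.vandermonde x)ᵀ := by
    ext i j
    simp only [Matrix.of_apply, Matrix.mul_apply, Matrix.transpose_apply,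
      Matrix.vandermonde_apply]
    rw [Polynomial.eval_eq_sum_range' (hdeg i), ← Fin.sum_univ_eq_sum_range]
  rw [key, Matrix.det_mul, Matrix.det_transpose, Matrix.det_vandermonde]
  have hdet1 : (Matrix.of fun i k : Fin N => (hr i).coeff k).det = 1 := by
    rw [Matrix.det_of_lowerTriangular _ ?ht]
    case ht =>
      intro i k h
      simp only [Matrix.of_apply]
      have hik : (i : ℕ) < (k : ℕ) := h
      simp only [hr, Polynomial.coeff_map]
      rw [coeff_hermite_of_lt hik]
      simp
    · refine Finset.prod_eq_one fun i _ => ?_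
      simp [hr, Polynomial.coeff_map, coeff_hermite_self]
  rw [hdet1, one_mul]
  rfl

lemma integrable_term (N : ℕ) (σ τ : Equiv.Perm (Fin N)) :
    Integrable (fun x : Fin N → ℝ =>
      ∏ i, ((hr (σ i)).eval (x i) * ((hr (τ i)).eval (x i) * gw (x i)))) :=
  Integrable.fintype_prod fun i => integrable_hr_hr (σ i) (τ i)

lemma integral_term (N : ℕ) (σ τ : Equiv.Perm (Fin N)) :
    ∫ x : Fin N → ℝ, ∏ i, ((hr (σ i)).eval (x i) * ((hr (τ i)).eval (x i) * gw (x i)))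
      = ∏ i : Fin N, HI (σ i) (τ i) := by
  rw [volume_pi, integral_fintype_prod_eq_prod (f := fun (i : Fin N) (y : ℝ) =>
    (hr (σ i)).eval y * ((hr (τ i)).eval y * gw y))]
  rfl

lemma integral_term_eq (N : ℕ) (σ τ : Equiv.Perm (Fin N)) :
    ∫ x : Fin N → ℝ, ∏ i, ((hr (σ i)).eval (x i) * ((hr (τ i)).eval (x i) * gw (x i)))
      = if σ = τ then ∏ k ∈ Finset.range N, (Real.sqrt (2*π) * (Nat.factorial k)) else 0 := by
  rw [integral_term]
  by_cases h : σ = τ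
  · subst h
    rw [if_pos rfl]
    have : ∀ i : Fin N, HI (σ i) (σ i) = Real.sqrt (2*π) * (Nat.factorial (σ i)) := by
      intro i; rw [HI_eq]; simp
    rw [Finset.prod_congr rfl fun i _ => this i]
    rw [Equiv.prod_comp σ (fun k : Fin N => Real.sqrt (2*π) * (Nat.factorial (k : ℕ)))]
    rw [Fin.prod_univ_eq_prod_range (fun k => Real.sqrt (2*π) * (Nat.factorial k)) N]
  · rw [if_neg h]
    have : ∃ i, σ i ≠ τ i := by
      by_contra hc
      push_neg at hc
      exact h (Equiv.ext hc)
    obtain ⟨i, hi⟩ := this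
    refine Finset.prod_eq_zero (Finset.mem_univ i) ?_
    rw [HI_eq, if_neg (fun hh => hi (Fin.val_injective hh))]

lemma full_integral (N : ℕ) :
    ∫ x : Fin N → ℝ, (∏ j, gw (x j)) * (vandermonde N x)^2
      = (Nat.factorial N : ℝ) * ∏ k ∈ Finset.range N, (Real.sqrt (2*π) * (Nat.factorial k)) := by
  have hexp : ∀ x : Fin N → ℝ, (∏ j, gw (x j)) * (vandermonde N x)^2 =
      ∑ σ : Equiv.Perm (Fin N), ∑ τ : Equiv.Perm (Fin N),
        ((Equiv.Perm.sign σ : ℤ) : ℝ) * ((Equiv.Perm.sign τ : ℤ) : ℝ) *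
          ∏ i, ((hr (σ i)).eval (x i) * ((hr (τ i)).eval (x i) * gw (x i))) := by
    intro x
    rw [← det_hr_eq N x]
    rw [Matrix.det_apply', sq]
    rw [Finset.sum_mul_sum]
    rw [Finset.mul_sum]
    refine Finset.sum_congr rfl fun σ _ => ?_
    rw [Finset.mul_sum]
    refine Finset.sum_congr rfl fun τ _ => ?_
    simp only [Matrix.of_apply]
    rw [Finset.prod_mul_distrib, Finset.prod_mul_distrib]
    ring
  simp_rw [hexp]
  rw [integral_finset_sum _ fun σ _ => integrable_finset_sum _ fun τ _ =>
    ((integrable_term N σ τ).const_mul _)]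
  have : ∀ σ : Equiv.Perm (Fin N),
      (∫ x : Fin N → ℝ, ∑ τ : Equiv.Perm (Fin N),
        ((Equiv.Perm.sign σ : ℤ) : ℝ) * ((Equiv.Perm.sign τ : ℤ) : ℝ) *
          ∏ i, ((hr (σ i)).eval (x i) * ((hr (τ i)).eval (x i) * gw (x i))))
      = ∏ k ∈ Finset.range N, (Real.sqrt (2*π) * (Nat.factorial k)) := by
    intro σ
    rw [integral_finset_sum _ fun τ _ => ((integrable_term N σ τ).const_mul _)]
    have h2 : ∀ τ : Equiv.Perm (Fin N),
        (∫ x : Fin N → ℝ, ((Equiv.Perm.sign σ : ℤ) : ℝ) * ((Equiv.Perm.sign τ : ℤ) : ℝ) *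
          ∏ i, ((hr (σ i)).eval (x i) * ((hr (τ i)).eval (x i) * gw (x i))))
        = if σ = τ then ∏ k ∈ Finset.range N, (Real.sqrt (2*π) * (Nat.factorial k)) else 0 := by
      intro τ
      rw [integral_const_mul, integral_term_eq]
      by_cases h : σ = τ
      · subst h
        have : ((Equiv.Perm.sign σ : ℤ) : ℝ) * ((Equiv.Perm.sign σ : ℤ) : ℝ) = 1 := by
          rcases Int.units_eq_one_or (Equiv.Perm.sign σ) with h | h <;> rw [h] <;> norm_num
        simp only [if_pos rfl]
        rw [this, one_mul]
      · simp only [if_neg h, mul_zero]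
    rw [Finset.sum_congr rfl fun τ _ => h2 τ]
    rw [Finset.sum_ite_eq Finset.univ σ
      (fun _ => ∏ k ∈ Finset.range N, (Real.sqrt (2*π) * (Nat.factorial k)))]
    simp
  rw [Finset.sum_congr rfl fun σ _ => this σ]
  rw [Finset.sum_const, Finset.card_univ]
  simp [Fintype.card_perm, nsmul_eq_mul]

noncomputable def F1 (N : ℕ) : (Fin N → ℝ) → ℝ :=
  fun x => (∏ j, gw (x j)) * (vandermonde N x)^2

lemma expand_F1 (N : ℕ) (x : Fin N → ℝ) :
    F1 N x = ∑ σ : Equiv.Perm (Fin N), ∑ τ : Equiv.Perm (Fin N),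
        ((Equiv.Perm.sign σ : ℤ) : ℝ) * ((Equiv.Perm.sign τ : ℤ) : ℝ) *
          ∏ i, ((hr (σ i)).eval (x i) * ((hr (τ i)).eval (x i) * gw (x i))) := by
  unfold F1
  rw [← det_hr_eq N x]
  rw [Matrix.det_apply', sq]
  rw [Finset.sum_mul_sum]
  rw [Finset.mul_sum]
  refine Finset.sum_congr rfl fun σ _ => ?_
  rw [Finset.mul_sum]
  refine Finset.sum_congr rfl fun τ _ => ?_
  simp only [Matrix.of_apply]
  rw [Finset.prod_mul_distrib, Finset.prod_mul_distrib]
  ring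

lemma integrable_F1 (N : ℕ) : Integrable (F1 N) := by
  rw [show F1 N = fun x => ∑ σ : Equiv.Perm (Fin N), ∑ τ : Equiv.Perm (Fin N),
        ((Equiv.Perm.sign σ : ℤ) : ℝ) * ((Equiv.Perm.sign τ : ℤ) : ℝ) *
          ∏ i, ((hr (σ i)).eval (x i) * ((hr (τ i)).eval (x i) * gw (x i)))
      from funext (expand_F1 N)]
  exact integrable_finset_sum _ fun σ _ => integrable_finset_sum _ fun τ _ =>
    ((integrable_term N σ τ).const_mul _)

lemma measurableSet_SM (N : ℕ) : MeasurableSet {x : Fin N → ℝ | StrictMono x} := by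
  have h : {x : Fin N → ℝ | StrictMono x}
      = ⋂ p : Fin N × Fin N, {x | p.1 < p.2 → x p.1 < x p.2} := by
    ext x
    simp only [Set.mem_iInter, Set.mem_setOf_eq]
    exact ⟨fun h p hp => h hp, fun h a b hab => h (a, b) hab⟩
  rw [h]
  refine MeasurableSet.iInter fun p => ?_
  by_cases hp : p.1 < p.2
  · have : {x : Fin N → ℝ | p.1 < p.2 → x p.1 < x p.2} = {x | x p.1 < x p.2} := by
      ext x; simp [hp]
    rw [this]
    exact measurableSet_lt (measurable_pi_apply _) (measurable_pi_apply _)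
  · have : {x : Fin N → ℝ | p.1 < p.2 → x p.1 < x p.2} = Set.univ := by
      ext x; simp [hp]
    rw [this]
    exact MeasurableSet.univ

lemma vdm_eq_det (N : ℕ) (x : Fin N → ℝ) :
    vandermonde N x = (Matrix.vandermonde x).det := by
  rw [Matrix.det_vandermonde]; rfl

lemma vandermonde_comp_perm (N : ℕ) (x : Fin N → ℝ) (σ : Equiv.Perm (Fin N)) :
    vandermonde N (x ∘ σ) = ((Equiv.Perm.sign σ : ℤ) : ℝ) * vandermonde N x := by
  rw [vdm_eq_det, vdm_eq_det]
  have h : Matrix.vandermonde (x ∘ σ) = (Matrix.vandermonde x).submatrix σ id := by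
    ext i j
    simp [Matrix.vandermonde]
  rw [h, Matrix.det_permute]

lemma F1_comp_perm (N : ℕ) (x : Fin N → ℝ) (σ : Equiv.Perm (Fin N)) :
    F1 N (x ∘ σ) = F1 N x := by
  unfold F1
  rw [vandermonde_comp_perm, mul_pow]
  have hs : ((Equiv.Perm.sign σ : ℤ) : ℝ)^2 = 1 := by
    rcases Int.units_eq_one_or (Equiv.Perm.sign σ) with h | h <;> rw [h] <;> norm_num
  rw [hs, one_mul]
  congr 1
  exact Equiv.prod_comp σ (fun i => gw (x i))

lemma setIntegral_chamber (N : ℕ) (σ : Equiv.Perm (Fin N)) :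
    ∫ x in {x : Fin N → ℝ | StrictMono (x ∘ σ)}, F1 N x
      = ∫ x in {x : Fin N → ℝ | StrictMono x}, F1 N x := by
  set T := MeasurableEquiv.piCongrLeft (fun _ : Fin N => ℝ) σ⁻¹ with hTdef
  have hT : ∀ x : Fin N → ℝ, T x = x ∘ σ := by
    intro x
    funext j
    have h := Equiv.piCongrLeft_apply_apply (fun _ : Fin N => ℝ) σ⁻¹ x (σ j)
    rw [show σ⁻¹ (σ j) = j from σ.symm_apply_apply j] at h
    simpa only [hTdef, MeasurableEquiv.coe_piCongrLeft, Function.comp_apply] using h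
  have hmp : MeasurePreserving T volume volume :=
    volume_measurePreserving_piCongrLeft (fun _ : Fin N => ℝ) σ⁻¹
  have hemb := T.measurableEmbedding
  have hpre : T ⁻¹' {x : Fin N → ℝ | StrictMono x} = {x : Fin N → ℝ | StrictMono (x ∘ σ)} := by
    ext x
    simp only [Set.mem_preimage, Set.mem_setOf_eq, hT x]
  have hmeas : MeasurableSet (T ⁻¹' {x : Fin N → ℝ | StrictMono x}) :=
    T.measurable (measurableSet_SM N)
  calc ∫ x in {x : Fin N → ℝ | StrictMono (x ∘ σ)}, F1 N x
      = ∫ x in T ⁻¹' {x : Fin N → ℝ | StrictMono x}, F1 N x := by rw [hpre]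
    _ = ∫ x in T ⁻¹' {x : Fin N → ℝ | StrictMono x}, F1 N (T x) := by
        refine setIntegral_congr_fun hmeas fun x _ => ?_
        rw [hT x, F1_comp_perm]
    _ = ∫ x in {x : Fin N → ℝ | StrictMono x}, F1 N x :=
        hmp.setIntegral_preimage_emb hemb (F1 N) _

lemma noninjective_null (N : ℕ) :
    volume {x : Fin N → ℝ | ¬ Function.Injective x} = 0 := by
  have hsub : {x : Fin N → ℝ | ¬ Function.Injective x} ⊆
      ⋃ p : {p : Fin N × Fin N // p.1 ≠ p.2},
        (LinearMap.ker ((LinearMap.proj p.1.1 : (Fin N → ℝ) →ₗ[ℝ] ℝ)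
          - LinearMap.proj p.1.2) : Set (Fin N → ℝ)) := by
    intro x hx
    simp only [Function.Injective, not_forall] at hx
    obtain ⟨a, b, hab, hne⟩ := hx
    refine Set.mem_iUnion.2 ⟨⟨(a, b), hne⟩, ?_⟩
    simp only [SetLike.mem_coe, LinearMap.mem_ker, LinearMap.sub_apply, LinearMap.proj_apply]
    rw [hab]; ring
  refine measure_mono_null hsub (measure_iUnion_null fun p => ?_)
  refine Measure.addHaar_submodule volume _ ?_
  intro h
  have hmem : Pi.single p.1.1 (1:ℝ) ∈ LinearMap.ker ((LinearMap.proj p.1.1 :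
      (Fin N → ℝ) →ₗ[ℝ] ℝ) - LinearMap.proj p.1.2) := by
    rw [h]; trivial
  rw [LinearMap.mem_ker, LinearMap.sub_apply, LinearMap.proj_apply, LinearMap.proj_apply] at hmem
  rw [Pi.single_eq_same, Pi.single_eq_of_ne (Ne.symm p.2)] at hmem
  norm_num at hmem

lemma chamber_decomp (N : ℕ) :
    ∫ x : Fin N → ℝ, F1 N x
      = (Nat.factorial N : ℝ) * ∫ x in {x : Fin N → ℝ | StrictMono x}, F1 N x := by
  classical
  set A : Equiv.Perm (Fin N) → Set (Fin N → ℝ) := fun σ => {x | StrictMono (x ∘ σ)} with hA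
  have hAmeas : ∀ σ, MeasurableSet (A σ) := by
    intro σ
    have : A σ = (fun x : Fin N → ℝ => x ∘ σ) ⁻¹' {x | StrictMono x} := rfl
    rw [this]
    exact (measurable_pi_lambda _ fun j => measurable_pi_apply (σ j)) (measurableSet_SM N)
  have hdisj : (↑(Finset.univ : Finset (Equiv.Perm (Fin N))) : Set (Equiv.Perm (Fin N))).PairwiseDisjoint A := by
    intro σ _ τ _ hne
    rw [Function.onFun, Set.disjoint_left]
    intro x hxσ hxτ
    have hσ : StrictMono (x ∘ σ) := hxσ
    have hτ : StrictMono (x ∘ τ) := hxτ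
    have hinj : Function.Injective x := by
      intro a b h
      have h2 : (x ∘ σ) (σ⁻¹ a) = (x ∘ σ) (σ⁻¹ b) := by
        simp only [Function.comp_apply, Equiv.Perm.coe_inv, Equiv.apply_symm_apply]
        exact h
      have := hσ.injective h2
      calc a = σ (σ⁻¹ a) := (σ.apply_symm_apply a).symm
        _ = σ (σ⁻¹ b) := by rw [this]
        _ = b := σ.apply_symm_apply b
    have heq : x ∘ σ = x ∘ τ := Tuple.unique_monotone hσ.monotone hτ.monotone
    exact hne (Equiv.ext fun i => hinj (congrFun heq i))
  have hcover : {x : Fin N → ℝ | Function.Injective x} ⊆ ⋃ σ, A σ := by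
    intro x hx
    refine Set.mem_iUnion.2 ⟨Tuple.sort x, ?_⟩
    have hmono : Monotone (x ∘ Tuple.sort x) := Tuple.monotone_sort x
    have hinj : Function.Injective (x ∘ Tuple.sort x) :=
      hx.comp (Tuple.sort x).injective
    exact hmono.strictMono_of_injective hinj
  have hUc : volume (⋃ σ, A σ)ᶜ = 0 := by
    refine measure_mono_null ?_ (noninjective_null N)
    intro x hx
    simp only [Set.mem_compl_iff] at hx
    by_contra hcon
    simp only [Set.mem_setOf_eq, not_not] at hcon
    exact hx (hcover hcon)
  have hmeasU : MeasurableSet (⋃ σ, A σ) := MeasurableSet.iUnion hAmeas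
  have h1 : ∫ x : Fin N → ℝ, F1 N x = ∫ x in ⋃ σ, A σ, F1 N x := by
    rw [← integral_add_compl hmeasU (integrable_F1 N)]
    rw [show (volume.restrict (⋃ σ, A σ)ᶜ) = 0 from Measure.restrict_eq_zero.2 hUc]
    simp
  have h2 : (⋃ σ, A σ) = ⋃ σ ∈ (Finset.univ : Finset (Equiv.Perm (Fin N))), A σ := by
    simp
  rw [h1, h2, integral_biUnion_finset _ (fun σ _ => hAmeas σ) hdisj
    (fun σ _ => (integrable_F1 N).integrableOn)]
  rw [Finset.sum_congr rfl fun σ _ => setIntegral_chamber N σ]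
  rw [Finset.sum_const, Finset.card_univ, Fintype.card_perm]
  simp [nsmul_eq_mul]

lemma chamber_value (N : ℕ) :
    ∫ x in {x : Fin N → ℝ | StrictMono x}, F1 N x
      = ∏ k ∈ Finset.range N, (Real.sqrt (2*π) * (Nat.factorial k)) := by
  have h := chamber_decomp N
  have h2 : ∫ x : Fin N → ℝ, F1 N x
      = (Nat.factorial N : ℝ) * ∏ k ∈ Finset.range N, (Real.sqrt (2*π) * (Nat.factorial k)) := by
    rw [← full_integral N]; rfl
  rw [h2] at h
  have hN : (Nat.factorial N : ℝ) ≠ 0 := Nat.cast_ne_zero.2 (Nat.factorial_ne_zero N)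
  exact mul_left_cancel₀ hN h.symm

lemma vandermonde_smul (N : ℕ) (c : ℝ) (x : Fin N → ℝ) :
    vandermonde N (c • x) = c ^ (∑ j : Fin N, (Finset.Ioi j).card) * vandermonde N x := by
  unfold _root_.vandermonde
  have h : ∀ j : Fin N, ∏ k ∈ Finset.Ioi j, ((c • x) k - (c • x) j)
      = c ^ (Finset.Ioi j).card * ∏ k ∈ Finset.Ioi j, (x k - x j) := by
    intro j
    rw [← Finset.prod_const, ← Finset.prod_mul_distrib]
    refine Finset.prod_congr rfl fun k _ => ?_
    simp only [Pi.smul_apply, smul_eq_mul]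
    ring
  rw [Finset.prod_congr rfl fun j _ => h j, Finset.prod_mul_distrib,
    Finset.prod_pow_eq_pow_sum]

lemma sum_card_Ioi (N : ℕ) :
    N + 2 * (∑ j : Fin N, (Finset.Ioi j).card) = N * N := by
  have h1 : (∑ j : Fin N, (Finset.Ioi j).card) = ∑ j ∈ Finset.range N, (N - 1 - j) := by
    rw [← Fin.sum_univ_eq_sum_range (fun j => N - 1 - j) N]
    exact Finset.sum_congr rfl fun j _ => Fin.card_Ioi j
  have h2 : ∑ j ∈ Finset.range N, (N - 1 - j) = ∑ j ∈ Finset.range N, j := by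
    rw [← Finset.sum_range_reflect (fun j => j) N]
  have h3 : (∑ j ∈ Finset.range N, j) * 2 = N * (N - 1) := Finset.sum_range_id_mul_two N
  cases N with
  | zero => simp [h1]
  | succ M =>
      rw [h1, h2]
      have h4 : (∑ j ∈ Finset.range (M+1), j) * 2 = (M+1) * M := by
        rw [h3]; simp
      have h5 : (M+1) * (M+1) = (M+1) * M + (M+1) := by ring
      omega

lemma strictMono_smul_iff {N : ℕ} {c : ℝ} (hc : 0 < c) (x : Fin N → ℝ) :
    StrictMono (c • x) ↔ StrictMono x := by
  unfold StrictMono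
  simp only [Pi.smul_apply, smul_eq_mul, mul_lt_mul_iff_of_pos_left hc]

/-- Selberg-type Gaussian integral over the Weyl chamber with squared Vandermonde. -/
theorem gaussian_vandermonde_sq_integral (N : ℕ) (t : ℝ) (ht : 0 < t) :
    ∫ x in {x : Fin N → ℝ | StrictMono x},
        Real.exp (-(∑ j, x j ^ 2) / (2 * t)) * (vandermonde N x) ^ 2 =
      ((2 * π) ^ ((N : ℝ) / 2) * ∏ j ∈ Finset.range N, Real.Gamma (j + 1)) *
        t ^ (((N : ℝ) ^ 2) / 2) := by
  classical
  set S := {x : Fin N → ℝ | StrictMono x} with hSdef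
  set K := ∑ j : Fin N, (Finset.Ioi j).card with hKdef
  set c := Real.sqrt t with hcdef
  have hc : 0 < c := Real.sqrt_pos.2 ht
  have hc2 : c ^ 2 = t := Real.sq_sqrt ht.le
  set G : (Fin N → ℝ) → ℝ :=
    fun x => Real.exp (-(∑ j, x j ^ 2) / (2 * t)) * (vandermonde N x) ^ 2 with hGdef
  have hpt : ∀ x : Fin N → ℝ,
      Set.indicator S G x = c ^ (2*K) * Set.indicator S (F1 N) (c⁻¹ • x) := by
    intro x
    have hmem : (c⁻¹ • x) ∈ S ↔ x ∈ S := by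
      simp only [hSdef, Set.mem_setOf_eq]
      exact strictMono_smul_iff (inv_pos.2 hc) x
    by_cases hx : x ∈ S
    · rw [Set.indicator_of_mem hx, Set.indicator_of_mem (hmem.2 hx)]
      have hvdm := vandermonde_smul N c⁻¹ x
      have hgw : ∏ j, gw ((c⁻¹ • x) j) = Real.exp (-(∑ j, x j ^ 2) / (2 * t)) := by
        unfold gw
        rw [← Real.exp_sum]
        congr 1
        have hterm : ∀ j : Fin N, -(((c⁻¹ • x) j) ^ 2 / 2) = -(x j ^ 2) / (2*t) := by
          intro j
          simp only [Pi.smul_apply, smul_eq_mul]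
          rw [mul_pow, inv_pow, hc2]
          field_simp
        rw [Finset.sum_congr rfl fun j _ => hterm j, ← Finset.sum_div, ← Finset.sum_neg_distrib]
      rw [hGdef]
      unfold F1
      rw [hgw, hvdm, ← hKdef]
      have hcne : c ≠ 0 := hc.ne'
      field_simp
      rw [mul_assoc, show c ^ (2 * K) * ((1 / c) ^ K) ^ 2 = 1 by rw [one_div, inv_pow, inv_pow, ← pow_mul, mul_comm K 2, mul_inv_cancel₀ (pow_ne_zero _ hcne)], mul_one]
    · rw [Set.indicator_of_notMem hx,
        Set.indicator_of_notMem (fun h => hx (hmem.1 h)), mul_zero]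
  rw [← integral_indicator (measurableSet_SM N)]
  have step1 : ∫ x, Set.indicator S G x
      = c ^ (2*K) * ∫ x, Set.indicator S (F1 N) (c⁻¹ • x) := by
    rw [integral_congr_ae (Filter.Eventually.of_forall hpt)]
    exact integral_const_mul _ _
  have hfinrank : Module.finrank ℝ (Fin N → ℝ) = N := by
    simp [Module.finrank_fintype_fun_eq_card]
  have step2 : ∫ x, Set.indicator S (F1 N) (c⁻¹ • x)
      = c ^ N * ∫ x, Set.indicator S (F1 N) x := by
    rw [Measure.integral_comp_inv_smul_of_nonneg volume (Set.indicator S (F1 N)) hc.le, hfinrank,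
      smul_eq_mul]
  have step3 : ∫ x, Set.indicator S (F1 N) x
      = ∏ k ∈ Finset.range N, (Real.sqrt (2*π) * (Nat.factorial k)) := by
    rw [integral_indicator (measurableSet_SM N)]
    exact chamber_value N
  rw [step1, step2, step3]
  have hpow : c ^ (2*K) * (c ^ N * ∏ k ∈ Finset.range N, (Real.sqrt (2*π) * (Nat.factorial k)))
      = c ^ (N*N) * ∏ k ∈ Finset.range N, (Real.sqrt (2*π) * (Nat.factorial k)) := by
    rw [← mul_assoc, ← pow_add]
    congr 2
    rw [← sum_card_Ioi N, ← hKdef]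
    ring
  rw [hpow]
  have hct : c ^ (N*N) = t ^ (((N : ℝ) ^ 2) / 2) := by
    rw [hcdef, Real.sqrt_eq_rpow, ← Real.rpow_natCast (t ^ (1/2 : ℝ)) (N*N),
      ← Real.rpow_mul ht.le]
    congr 1
    push_cast
    ring
  have hV : ∏ k ∈ Finset.range N, (Real.sqrt (2*π) * (Nat.factorial k))
      = (2 * π) ^ ((N : ℝ) / 2) * ∏ j ∈ Finset.range N, Real.Gamma (j + 1) := by
    rw [Finset.prod_mul_distrib, Finset.prod_const, Finset.card_range]
    congr 1
    · rw [Real.sqrt_eq_rpow, ← Real.rpow_natCast ((2*π) ^ (1/2 : ℝ)) N,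
        ← Real.rpow_mul (by positivity : (0:ℝ) ≤ 2 * π)]
      congr 1
      push_cast
      ring
    · exact Finset.prod_congr rfl fun k _ => (Real.Gamma_nat_eq_factorial k).symm
  rw [hct, hV]
  ring
end

section
/- The Vandermonde determinant h_N(x) = ∏_{1≤j<k≤N}(x_k - x_j) is harmonic on ℝ^N: Σ_{j=1}^N ∂²h_N/∂x_j² = 0. -/
open MvPolynomial

noncomputable def phi {N : ℕ} (x : Fin N → ℝ) (j : Fin N) : Fin N → Polynomial ℝ :=
  fun k => if k = j then Polynomial.X else Polynomial.C (x k)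

lemma eval_aeval_phi {N : ℕ} (x : Fin N → ℝ) (j : Fin N) (P : MvPolynomial (Fin N) ℝ) (s : ℝ) :
    Polynomial.eval s (MvPolynomial.aeval (phi x j) P) = MvPolynomial.eval (Function.update x j s) P := by
  rw [show Polynomial.eval s (MvPolynomial.aeval (phi x j) P)
      = (Polynomial.aeval s).comp (MvPolynomial.aeval (phi x j)) P from rfl,
    MvPolynomial.comp_aeval]
  rw [show MvPolynomial.eval (Function.update x j s) P
      = MvPolynomial.aeval (Function.update x j s) P from rfl]
  have : (fun i => Polynomial.aeval s (phi x j i)) = Function.update x j s := by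
    funext k
    by_cases h : k = j <;> simp [phi, h, Function.update]
  rw [this]

lemma derivative_aeval_phi {N : ℕ} (x : Fin N → ℝ) (j : Fin N) (P : MvPolynomial (Fin N) ℝ) :
    Polynomial.derivative (MvPolynomial.aeval (phi x j) P)
      = MvPolynomial.aeval (phi x j) (MvPolynomial.pderiv j P) := by
  induction P using MvPolynomial.induction_on with
  | C a => simp
  | add p q hp hq => simp [hp, hq]
  | mul_X p n hp =>
      simp only [map_mul, Polynomial.derivative_mul, hp, Derivation.leibniz, MvPolynomial.pderiv_X,
        smul_eq_mul, map_add, map_mul]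
      by_cases h : n = j <;> simp [phi, h, Pi.single_apply, mul_comm] <;> ring

lemma deriv_eval_update {N : ℕ} (x : Fin N → ℝ) (j : Fin N) (P : MvPolynomial (Fin N) ℝ) :
    deriv (fun s => MvPolynomial.eval (Function.update x j s) P)
      = fun t => MvPolynomial.eval (Function.update x j t) (MvPolynomial.pderiv j P) := by
  funext t
  have h1 : (fun s => MvPolynomial.eval (Function.update x j s) P)
      = fun s => Polynomial.eval s (MvPolynomial.aeval (phi x j) P) := by
    funext s; rw [eval_aeval_phi]
  rw [h1, Polynomial.deriv, derivative_aeval_phi, eval_aeval_phi]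

lemma bridge {N : ℕ} (x : Fin N → ℝ) (j : Fin N) (P : MvPolynomial (Fin N) ℝ) :
    iteratedDeriv 2 (fun s => MvPolynomial.eval (Function.update x j s) P) (x j)
      = MvPolynomial.eval x (MvPolynomial.pderiv j (MvPolynomial.pderiv j P)) := by
  rw [show (2:ℕ) = 1 + 1 from rfl, iteratedDeriv_succ, iteratedDeriv_one]
  rw [deriv_eval_update, deriv_eval_update]
  simp [Function.update_eq_self]

open Finset in
lemma prod_X_pow_univ {N : ℕ} (e : Fin N → ℕ) :
    (∏ i : Fin N, (X i ^ e i : MvPolynomial (Fin N) ℝ))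
      = monomial (Finsupp.equivFunOnFinite.symm e) 1 := by
  rw [← MvPolynomial.prod_X_pow_eq_monomial]
  refine (Finset.prod_subset (Finset.subset_univ _) ?_).symm
  intro i _ hi
  have : Finsupp.equivFunOnFinite.symm e i = 0 := by
    simpa using Finsupp.notMem_support_iff.mp hi
  simp only [Finsupp.coe_equivFunOnFinite_symm] at this ⊢
  simp [this]

noncomputable def dS {N : ℕ} (σ : Equiv.Perm (Fin N)) : Fin N →₀ ℕ :=
  Finsupp.equivFunOnFinite.symm (fun i => ((σ i : ℕ)))

lemma Vp_eq (N : ℕ) :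
    (∏ j : Fin N, ∏ k ∈ Finset.Ioi j, (X k - X j) : MvPolynomial (Fin N) ℝ)
      = ∑ σ : Equiv.Perm (Fin N),
          (((Equiv.Perm.sign σ : ℤ) : ℝ)) • monomial (dS σ) 1 := by
  rw [← Matrix.det_vandermonde, Matrix.det_apply']
  refine Fintype.sum_equiv (Equiv.inv (Equiv.Perm (Fin N))) _ _ ?_
  intro σ
  have h1 : ∀ i, Matrix.vandermonde (X : Fin N → MvPolynomial (Fin N) ℝ) (σ i) i
      = (fun m => (X m : MvPolynomial (Fin N) ℝ) ^ ((σ⁻¹ m : ℕ))) (σ i) := by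
    intro i; simp [Matrix.vandermonde]
  simp only [Equiv.inv_apply, h1]
  rw [Equiv.prod_comp σ (fun m => (X m : MvPolynomial (Fin N) ℝ) ^ ((σ⁻¹ m : ℕ))),
    prod_X_pow_univ]
  rw [Equiv.Perm.sign_inv, Algebra.smul_def, MvPolynomial.algebraMap_eq, dS]
  rfl

lemma pderiv2_monomial {N : ℕ} (d : Fin N →₀ ℕ) (j : Fin N) :
    pderiv j (pderiv j (monomial d (1:ℝ))) =
      monomial (d - Finsupp.single j 1 - Finsupp.single j 1)
      ((d j : ℝ) * ((d j - 1 : ℕ) : ℝ)) := by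
  simp only [pderiv_monomial, one_mul, Finsupp.tsub_apply, Finsupp.single_eq_same]

lemma dS_apply {N : ℕ} (σ : Equiv.Perm (Fin N)) (m : Fin N) : dS σ m = (σ m : ℕ) := by
  simp [dS]

noncomputable def tIdx {N : ℕ} (σ : Equiv.Perm (Fin N)) (j : Fin N) : Fin N :=
  σ.symm ⟨(σ j : ℕ) - 2, lt_of_le_of_lt (Nat.sub_le _ _) (σ j).isLt⟩

lemma coe_tIdx {N : ℕ} (σ : Equiv.Perm (Fin N)) (j : Fin N) :
    ((σ (tIdx σ j) : ℕ)) = (σ j : ℕ) - 2 := by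
  simp [tIdx]

lemma tIdx_ne {N : ℕ} (σ : Equiv.Perm (Fin N)) (j : Fin N) (h : 2 ≤ (σ j : ℕ)) :
    tIdx σ j ≠ j := by
  intro he
  have := coe_tIdx σ j
  rw [he] at this
  omega

open Equiv in
lemma lap_zero (N : ℕ) :
    ∑ j : Fin N, pderiv j (pderiv j
        (∏ j : Fin N, ∏ k ∈ Finset.Ioi j, (X k - X j) : MvPolynomial (Fin N) ℝ)) = 0 := by
  rw [Vp_eq]
  simp only [map_sum, map_smul, Derivation.map_smul, pderiv2_monomial]
  set f : Fin N × Equiv.Perm (Fin N) → MvPolynomial (Fin N) ℝ := fun p =>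
    (((Equiv.Perm.sign p.2 : ℤ) : ℝ)) •
      monomial (dS p.2 - Finsupp.single p.1 1 - Finsupp.single p.1 1)
        ((dS p.2 p.1 : ℝ) * ((dS p.2 p.1 - 1 : ℕ) : ℝ)) with hf
  suffices key : ∑ p : Fin N × Equiv.Perm (Fin N), f p = 0 by
    rw [Fintype.sum_prod_type] at key
    exact key
  have fzero : ∀ p, ¬ 2 ≤ ((p.2 p.1 : ℕ)) → f p = 0 := by
    rintro ⟨j, σ⟩ h
    have hd : dS σ j = (σ j : ℕ) := dS_apply σ j
    have : (dS σ j : ℝ) * ((dS σ j - 1 : ℕ) : ℝ) = 0 := by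
      rw [hd]
      interval_cases hn : ((σ j : ℕ)) <;> simp
    simp only [hf, this, map_zero, smul_zero]
  set g : Fin N × Equiv.Perm (Fin N) → Fin N × Equiv.Perm (Fin N) := fun p =>
    if 2 ≤ ((p.2 p.1 : ℕ)) then (tIdx p.2 p.1, p.2 * Equiv.swap p.1 (tIdx p.2 p.1)) else p
    with hg
  refine Finset.sum_ninvolution g ?_ ?_ (fun _ => Finset.mem_univ _) ?_
  · -- f p + f (g p) = 0
    rintro ⟨j, σ⟩
    by_cases h : 2 ≤ ((σ j : ℕ))
    · set t := tIdx σ j with ht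
      set τ := σ * Equiv.swap j t with hτ
      have htj : t ≠ j := tIdx_ne σ j h
      have hτt : τ t = σ j := by simp [hτ, Equiv.Perm.mul_apply, Equiv.swap_apply_right]
      have hτj : τ j = σ t := by simp [hτ, Equiv.Perm.mul_apply, Equiv.swap_apply_left]
      have hτm : ∀ m, m ≠ j → m ≠ t → τ m = σ m := by
        intro m h1 h2; simp [hτ, Equiv.Perm.mul_apply, Equiv.swap_apply_of_ne_of_ne h1 h2]
      have hgp : g (j, σ) = (t, τ) := by simp [hg, h]; exact ⟨rfl, rfl⟩
      rw [hgp]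
      have hsign : ((Equiv.Perm.sign τ : ℤ) : ℝ) = -((Equiv.Perm.sign σ : ℤ) : ℝ) := by
        rw [hτ, Equiv.Perm.sign_mul, Equiv.Perm.sign_swap (Ne.symm htj)]
        push_cast
        ring
      have hcoef : ((dS τ t : ℝ) * ((dS τ t - 1 : ℕ) : ℝ))
          = ((dS σ j : ℝ) * ((dS σ j - 1 : ℕ) : ℝ)) := by
        rw [dS_apply, dS_apply, hτt]
      have e1 : ((τ j : ℕ)) = (σ j : ℕ) - 2 := by
        rw [hτj, ht]; exact coe_tIdx σ j
      have e2 : ((σ t : ℕ)) = (σ j : ℕ) - 2 := by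
        rw [ht]; exact coe_tIdx σ j
      have e3 : ((τ t : ℕ)) = ((σ j : ℕ)) := by rw [hτt]
      have hexp : dS τ - Finsupp.single t 1 - Finsupp.single t 1
          = dS σ - Finsupp.single j 1 - Finsupp.single j 1 := by
        ext m
        simp only [Finsupp.tsub_apply, dS_apply, Finsupp.single_apply]
        split_ifs with h1 h2 h3
        · exact absurd (h1.trans h2.symm) htj
        · rw [← h1]; omega
        · rw [← h3]; omega
        · rw [hτm m (fun hh => h3 hh.symm) (fun hh => h1 hh.symm)]
      show f (j, σ) + f (t, τ) = 0
      simp only [hf, hcoef, hexp, hsign]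
      rw [neg_smul, add_neg_cancel]
    · have hgp : g (j, σ) = (j, σ) := by simp [hg, h]
      rw [hgp, fzero (j, σ) h, add_zero]
  · -- f p ≠ 0 → g p ≠ p
    rintro ⟨j, σ⟩ hfp
    by_cases h : 2 ≤ ((σ j : ℕ))
    · have : g (j, σ) = (tIdx σ j, σ * Equiv.swap j (tIdx σ j)) := by simp [hg, h]
      rw [this]
      intro hc
      exact tIdx_ne σ j h (congrArg Prod.fst hc)
    · exact absurd (fzero (j, σ) h) hfp
  · -- g (g p) = p
    rintro ⟨j, σ⟩
    by_cases h : 2 ≤ ((σ j : ℕ))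
    · set t := tIdx σ j with ht
      set τ := σ * Equiv.swap j t with hτ
      have hτt : τ t = σ j := by simp [hτ, Equiv.Perm.mul_apply, Equiv.swap_apply_right]
      have hgp : g (j, σ) = (t, τ) := by simp [hg, h]; exact ⟨rfl, rfl⟩
      have h2 : 2 ≤ ((τ t : ℕ)) := by rw [hτt]; exact h
      have hτj : τ j = σ t := by simp [hτ, Equiv.Perm.mul_apply, Equiv.swap_apply_left]
      have htt : tIdx τ t = j := by
        have : σ t = ⟨(σ j : ℕ) - 2, lt_of_le_of_lt (Nat.sub_le _ _) (σ j).isLt⟩ := by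
          rw [ht]; exact Equiv.apply_symm_apply σ _
        rw [tIdx]
        apply τ.injective
        rw [Equiv.apply_symm_apply, hτj, this]
        congr 1
        rw [hτt]
      have hfin : τ * Equiv.swap t j = σ := by
        rw [hτ, Equiv.swap_comm t j, mul_assoc, Equiv.swap_mul_self, mul_one]
      rw [hgp, hg]
      simp only [h2, if_true, htt, hfin]
    · simp [hg, h]

/-- The Vandermonde determinant is harmonic: `Σ_j ∂²h_N/∂x_j² = 0`. -/
theorem vandermonde_harmonic (N : ℕ) (x : Fin N → ℝ) :
    ∑ j : Fin N,
        iteratedDeriv 2 (fun s => vandermonde N (Function.update x j s)) (x j) = 0 := by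
  set VP : MvPolynomial (Fin N) ℝ := ∏ j : Fin N, ∏ k ∈ Finset.Ioi j, (X k - X j) with hVP
  have hv : ∀ y : Fin N → ℝ, vandermonde N y = MvPolynomial.eval y VP := by
    intro y
    simp [vandermonde, hVP]
  have hsum : ∀ j : Fin N,
      iteratedDeriv 2 (fun s => vandermonde N (Function.update x j s)) (x j)
        = MvPolynomial.eval x (pderiv j (pderiv j VP)) := by
    intro j
    rw [show (fun s => vandermonde N (Function.update x j s))
        = fun s => MvPolynomial.eval (Function.update x j s) VP from funext fun s => hv _]
    exact bridge x j VP
  simp only [hsum]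
  rw [← map_sum, hVP, lap_zero, map_zero]
end
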